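/- arXiv:1806.07931 — 7 statements merged into one kernel-verified Lean document; each statement's English description precedes it below -/
import Mathlib

section
/- A function f defined on a nonempty convex set X in R^n is pseudoconvex with respect to the lower Dini derivative if and only if for all x, y in X, the restriction φ(t) = f(x + t(y-x)), defined on X(x,y) = {t ∈ R : x + t(y-x) ∈ X}, is pseudoconvex with respect to the lower Dini derivative (as a function of one variable). -/
open Filter Set

/-- Lower Dini directional derivative of a function of one real variable. -/
noncomputable def dini (φ : ℝ → ℝ) (s u : ℝ) : ℝ :=
  liminf (fun h : ℝ => (φ (s + h * u) - φ s) / h) (nhdsWithin 0 (Ioi 0))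

/-- Pseudoconvexity w.r.t. the lower Dini derivative, one variable. -/
def PseudoconvexOn (φ : ℝ → ℝ) (I : Set ℝ) : Prop :=
  ∀ s ∈ I, ∀ t ∈ I, φ t < φ s → dini φ s (t - s) < 0

/-- A direction `u` is admissible at `s` relative to `I`. -/
def Admissible (I : Set ℝ) (s u : ℝ) : Prop :=
  ∃ δ > 0, ∀ h ∈ Ioo (0:ℝ) δ, s + h * u ∈ I

/-- `s` is a stationary point of `φ` relative to `I`. -/
def Stationary (φ : ℝ → ℝ) (I : Set ℝ) (s : ℝ) : Prop :=
  ∀ u : ℝ, Admissible I s u → 0 ≤ dini φ s u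

/-- Lower Dini directional derivative of `f : ℝⁿ → ℝ` at `x` in direction `u`. -/
noncomputable def diniV {n : ℕ} (f : (Fin n → ℝ) → ℝ) (x u : Fin n → ℝ) : ℝ :=
  liminf (fun h : ℝ => (f (x + h • u) - f x) / h) (nhdsWithin 0 (Ioi 0))

/-- Pseudoconvexity of `f` on `X ⊆ ℝⁿ` w.r.t. the lower Dini derivative. -/
def PseudoconvexOnV {n : ℕ} (f : (Fin n → ℝ) → ℝ) (X : Set (Fin n → ℝ)) : Prop :=
  ∀ x ∈ X, ∀ y ∈ X, f y < f x → diniV f x (y - x) < 0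

/-- A direction `u` is admissible at `x` relative to `X`. -/
def AdmissibleV {n : ℕ} (X : Set (Fin n → ℝ)) (x u : Fin n → ℝ) : Prop :=
  ∃ δ > 0, ∀ h ∈ Ioo (0:ℝ) δ, x + h • u ∈ X

/-- `x` is a stationary point of `f` relative to `X`. -/
def StationaryV {n : ℕ} (f : (Fin n → ℝ) → ℝ) (X : Set (Fin n → ℝ)) (x : Fin n → ℝ) : Prop :=
  ∀ u : Fin n → ℝ, AdmissibleV X x u → 0 ≤ diniV f x u

/-- `f` is radially lower semicontinuous on `X`: lsc on every segment. -/
def RadiallyLSC {n : ℕ} (f : (Fin n → ℝ) → ℝ) (X : Set (Fin n → ℝ)) : Prop :=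
  ∀ x ∈ X, ∀ y ∈ X,
    LowerSemicontinuousOn (fun t : ℝ => f (x + t • (y - x))) (Icc 0 1)

/-- `f` is radially upper semicontinuous on `X`: usc on every segment. -/
def RadiallyUSC {n : ℕ} (f : (Fin n → ℝ) → ℝ) (X : Set (Fin n → ℝ)) : Prop :=
  ∀ x ∈ X, ∀ y ∈ X,
    UpperSemicontinuousOn (fun t : ℝ => f (x + t • (y - x))) (Icc 0 1)

/-- `f` is quasiconvex on `X`. -/
def QuasiconvexOnSeg {n : ℕ} (f : (Fin n → ℝ) → ℝ) (X : Set (Fin n → ℝ)) : Prop :=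
  ∀ x ∈ X, ∀ y ∈ X, ∀ t ∈ Icc (0:ℝ) 1, f (x + t • (y - x)) ≤ max (f x) (f y)

/-- `f` is semistrictly quasiconvex on `X`. -/
def SemistrictlyQuasiconvexOn {n : ℕ} (f : (Fin n → ℝ) → ℝ) (X : Set (Fin n → ℝ)) : Prop :=
  ∀ x ∈ X, ∀ y ∈ X, f y < f x → ∀ t ∈ Ioo (0:ℝ) 1, f (x + t • (y - x)) < f x

theorem stmt0 {n : ℕ} (X : Set (Fin n → ℝ)) (hX : Convex ℝ X) (hne : X.Nonempty)
    (f : (Fin n → ℝ) → ℝ) :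
    PseudoconvexOnV f X ↔
      ∀ x ∈ X, ∀ y ∈ X,
        PseudoconvexOn (fun t : ℝ => f (x + t • (y - x)))
          {t : ℝ | x + t • (y - x) ∈ X} := by
  have key : ∀ (x y : Fin n → ℝ) (s t : ℝ),
      dini (fun t : ℝ => f (x + t • (y - x))) s (t - s)
        = diniV f (x + s • (y - x)) ((x + t • (y - x)) - (x + s • (y - x))) := by
    intro x y s t
    unfold dini diniV
    congr 1
    funext h
    have e : x + (s + h * (t - s)) • (y - x)
        = (x + s • (y - x)) + h • ((x + t • (y - x)) - (x + s • (y - x))) := by module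
    simp only [e]
  constructor
  · intro hpc x hx y hy s hs t ht hlt
    simp only [Set.mem_setOf_eq] at hs ht
    rw [key x y s t]
    exact hpc _ hs _ ht hlt
  · intro hpc x hx y hy hlt
    have h0 : x + (0:ℝ) • (y - x) = x := by module
    have h1 : x + (1:ℝ) • (y - x) = y := by module
    have := hpc x hx y hy 0 (by simp [Set.mem_setOf_eq, h0, hx]) 1
      (by simp [Set.mem_setOf_eq, h1, hy]) (by simp [h0, h1, hlt])
    have hk := key x y 0 1
    rw [h0, h1] at hk
    rw [← hk]
    exact this
end

section
/- Let φ : I → R be a lower semicontinuous function on an interval I ⊆ R that is pseudoconvex with respect to the lower Dini derivative. If a, b ∈ I with a < b and φ(a) < φ(b), then φ is strictly monotone increasing on I ∩ [b, +∞). -/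
open Filter Set

/-- The set of global minimizers of `φ` over `I`. -/
def ArgminSet (φ : ℝ → ℝ) (I : Set ℝ) : Set ℝ := {t ∈ I | ∀ s ∈ I, φ t ≤ φ s}

/-- If the lower Dini derivative is negative, there are arbitrarily small steps with descent. -/
lemma dini_desc {φ : ℝ → ℝ} {s u : ℝ} (h : dini φ s u < 0) {ε : ℝ} (hε : 0 < ε) :
    ∃ t ∈ Ioo (0:ℝ) ε, φ (s + t * u) < φ s := by
  by_contra hc
  push_neg at hc
  have h0 : (0:ℝ) ∈ {a | ∀ᶠ t in nhdsWithin 0 (Ioi 0), a ≤ (φ (s + t * u) - φ s) / t} := by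
    have hm : Ioo (0:ℝ) ε ∈ nhdsWithin (0:ℝ) (Ioi 0) :=
      Ioo_mem_nhdsGT_of_mem ⟨le_refl 0, hε⟩
    filter_upwards [hm] with t ht
    have h1 := hc t ht
    have h2 : 0 ≤ φ (s + t * u) - φ s := by linarith
    exact div_nonneg h2 ht.1.le
  have hnn : (0:ℝ) ≤ dini φ s u := by
    rw [dini, liminf_eq]
    by_cases hb : BddAbove {a | ∀ᶠ t in nhdsWithin (0:ℝ) (Ioi 0),
        a ≤ (φ (s + t * u) - φ s) / t}
    · exact le_csSup hb h0
    · rw [Real.sSup_of_not_bddAbove hb]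
  linarith

/-- Sublevel sets of a lsc function intersected with a compact subinterval are closed. -/
lemma sublevel_closed {I : Set ℝ} {φ : ℝ → ℝ} (hlsc : LowerSemicontinuousOn φ I)
    {p q c : ℝ} (hpq : Icc p q ⊆ I) :
    IsClosed {t ∈ Icc p q | φ t ≤ c} := by
  refine isClosed_of_closure_subset fun x hx => ?_
  have hxpq : x ∈ Icc p q := by
    have h1 : closure {t ∈ Icc p q | φ t ≤ c} ⊆ closure (Icc p q) :=
      closure_mono fun t ht => ht.1
    have := h1 hx
    rwa [isClosed_Icc.closure_eq] at this
  refine ⟨hxpq, ?_⟩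
  by_contra hgt
  push_neg at hgt
  have hev : ∀ᶠ t in nhdsWithin x I, c < φ t := hlsc x (hpq hxpq) c hgt
  have hne : (nhdsWithin x {t ∈ Icc p q | φ t ≤ c}).NeBot :=
    mem_closure_iff_nhdsWithin_neBot.1 hx
  have hev2 : ∀ᶠ t in nhdsWithin x {t ∈ Icc p q | φ t ≤ c}, c < φ t :=
    hev.filter_mono (nhdsWithin_mono x fun t ht => hpq ht.1)
  obtain ⟨t, htc, htK⟩ := (hev2.and eventually_mem_nhdsWithin).exists
  exact absurd htK.2 (not_le.2 htc)

/-- A lsc function attains its minimum on a compact subinterval. -/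
lemma lsc_min {I : Set ℝ} {φ : ℝ → ℝ} (hlsc : LowerSemicontinuousOn φ I)
    {p q : ℝ} (hpq : p ≤ q) (hsub : Icc p q ⊆ I) :
    ∃ m ∈ Icc p q, ∀ t ∈ Icc p q, φ m ≤ φ t := by
  have hne : (Icc p q).Nonempty := nonempty_Icc.2 hpq
  haveI : Nonempty (Icc p q) := hne.to_subtype
  set K : Icc p q → Set ℝ := fun t => {x ∈ Icc p q | φ x ≤ φ t} with hK
  have hKne : ∀ t, (K t).Nonempty := fun t => ⟨t, t.2, le_refl _⟩
  have hKcl : ∀ t, IsClosed (K t) := fun t => sublevel_closed hlsc hsub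
  have hKcp : ∀ t, IsCompact (K t) := fun t =>
    isCompact_Icc.of_isClosed_subset (hKcl t) fun x hx => hx.1
  have hdir : Directed (· ⊇ ·) K := by
    intro t1 t2
    rcases le_total (φ t1) (φ t2) with h | h
    · exact ⟨t1, subset_rfl, fun x hx => ⟨hx.1, hx.2.trans h⟩⟩
    · exact ⟨t2, fun x hx => ⟨hx.1, hx.2.trans h⟩, subset_rfl⟩
  obtain ⟨m, hm⟩ :=
    IsCompact.nonempty_iInter_of_directed_nonempty_isCompact_isClosed K hdir hKne hKcp hKcl
  obtain ⟨t0⟩ : Nonempty (Icc p q) := inferInstance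
  exact ⟨m, (mem_iInter.1 hm t0).1, fun t ht => (mem_iInter.1 hm ⟨t, ht⟩).2⟩

/-- Pseudoconvex lsc functions are quasiconvex. -/
lemma qc_aux {I : Set ℝ} (hI : I.OrdConnected) {φ : ℝ → ℝ}
    (hlsc : LowerSemicontinuousOn φ I) (hpc : PseudoconvexOn φ I)
    {u v w : ℝ} (hu : u ∈ I) (hv : v ∈ I) (hw : w ∈ I) (huv : u < v) (hvw : v < w) :
    φ v ≤ max (φ u) (φ w) := by
  by_contra hgt
  push_neg at hgt
  set M := max (φ u) (φ w) with hM
  have huM : φ u ≤ M := le_max_left _ _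
  have hwM : φ w ≤ M := le_max_right _ _
  have hsub : Icc u w ⊆ I := hI.out hu hw
  have hsubl : Icc u v ⊆ I := fun t ht => hsub ⟨ht.1, ht.2.trans hvw.le⟩
  have hsubr : Icc v w ⊆ I := fun t ht => hsub ⟨huv.le.trans ht.1, ht.2⟩
  -- left boundary point c
  set Sl := {t ∈ Icc u v | φ t ≤ M} with hSl
  have hSlne : Sl.Nonempty := ⟨u, ⟨le_refl u, huv.le⟩, huM⟩
  have hSlbdd : BddAbove Sl := ⟨v, fun t ht => ht.1.2⟩
  have hSlcl : IsClosed Sl := sublevel_closed hlsc hsubl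
  have hcSl : sSup Sl ∈ Sl := hSlcl.csSup_mem hSlne hSlbdd
  set c := sSup Sl with hc
  have hcv : c < v := lt_of_le_of_ne hcSl.1.2 (by
    intro hcv; exact absurd (hcv ▸ hcSl.2) (not_le.2 hgt))
  have hlgt : ∀ t, c < t → t ≤ v → M < φ t := by
    intro t hct htv
    by_contra hle
    push_neg at hle
    have : t ∈ Sl := ⟨⟨hcSl.1.1.trans hct.le, htv⟩, hle⟩
    exact absurd (le_csSup hSlbdd this) (not_le.2 hct)
  -- right boundary point d
  set Sr := {t ∈ Icc v w | φ t ≤ M} with hSr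
  have hSrne : Sr.Nonempty := ⟨w, ⟨hvw.le, le_refl w⟩, hwM⟩
  have hSrbdd : BddBelow Sr := ⟨v, fun t ht => ht.1.1⟩
  have hSrcl : IsClosed Sr := sublevel_closed hlsc hsubr
  have hdSr : sInf Sr ∈ Sr := hSrcl.csInf_mem hSrne hSrbdd
  set d := sInf Sr with hd
  have hvd : v < d := lt_of_le_of_ne hdSr.1.1 (by
    intro hvd; exact absurd (hvd ▸ hdSr.2) (not_le.2 hgt))
  have hrgt : ∀ t, v ≤ t → t < d → M < φ t := by
    intro t hvt htd
    by_contra hle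
    push_neg at hle
    have : t ∈ Sr := ⟨⟨hvt, htd.le.trans hdSr.1.2⟩, hle⟩
    exact absurd (csInf_le hSrbdd this) (not_le.2 htd)
  -- all of (c, d) lies above M
  have hmid : ∀ t, c < t → t < d → M < φ t := by
    intro t hct htd
    rcases le_total t v with h | h
    · exact hlgt t hct h
    · exact hrgt t h htd
  -- pick a compact subinterval [p, q] ⊂ (c, d)
  set p := (c + v) / 2 with hp
  set q := (v + d) / 2 with hq
  have hcp : c < p := by simp only [hp]; linarith
  have hpv : p < v := by simp only [hp]; linarith
  have hvq : v < q := by simp only [hq]; linarith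
  have hqd : q < d := by simp only [hq]; linarith
  have hpq : p ≤ q := (hpv.trans hvq).le
  have hsubpq : Icc p q ⊆ I := fun t ht =>
    hsub ⟨hcSl.1.1.trans (hcp.le.trans ht.1), (ht.2.trans hqd.le).trans hdSr.1.2⟩
  obtain ⟨m, hmpq, hmin⟩ := lsc_min hlsc hpq hsubpq
  have hcm : c < m := hcp.trans_le hmpq.1
  have hmd : m < d := hmpq.2.trans_lt hqd
  have hmI : m ∈ I := hsubpq hmpq
  have hMm : M < φ m := hmid m hcm hmd
  have hcI : c ∈ I := hsubl hcSl.1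
  have hdI : d ∈ I := hsubr hdSr.1
  rcases lt_or_eq_of_le hmpq.2 with hmq | hmq
  · -- m < q : descend to the right towards d
    have hdini : dini φ m (d - m) < 0 :=
      hpc m hmI d hdI (lt_of_le_of_lt hdSr.2 hMm)
    have hdm : (0:ℝ) < d - m := by linarith
    have hεpos : (0:ℝ) < (q - m) / (d - m) := div_pos (by linarith) hdm
    obtain ⟨t, ht, hlt⟩ := dini_desc hdini hεpos
    have hx : m + t * (d - m) ∈ Icc p q := by
      constructor
      · nlinarith [ht.1, hmpq.1]
      · have : t * (d - m) < q - m := by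
          have := (lt_div_iff₀ hdm).1 ht.2
          linarith [mul_comm t (d - m)]
        linarith
    exact absurd (hmin _ hx) (not_le.2 hlt)
  · -- m = q : descend to the left towards c
    have hdini : dini φ m (c - m) < 0 :=
      hpc m hmI c hcI (lt_of_le_of_lt hcSl.2 hMm)
    have hmc : (0:ℝ) < m - c := by linarith
    have hpm : p < m := by rw [hmq]; exact hpv.trans hvq
    have hεpos : (0:ℝ) < (m - p) / (m - c) := div_pos (by linarith) hmc
    obtain ⟨t, ht, hlt⟩ := dini_desc hdini hεpos
    have hx : m + t * (c - m) ∈ Icc p q := by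
      constructor
      · have : t * (m - c) < m - p := by
          have := (lt_div_iff₀ hmc).1 ht.2
          linarith [mul_comm t (m - c)]
        nlinarith [ht.1]
      · nlinarith [ht.1, hmpq.2]
    exact absurd (hmin _ hx) (not_le.2 hlt)

theorem stmt1 (I : Set ℝ) (hI : I.OrdConnected) (φ : ℝ → ℝ)
    (hlsc : LowerSemicontinuousOn φ I) (hpc : PseudoconvexOn φ I)
    (a b : ℝ) (ha : a ∈ I) (hb : b ∈ I) (hab : a < b) (hφ : φ a < φ b) :
    StrictMonoOn φ (I ∩ Ici b) := by
  intro x hx y hy hxy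
  obtain ⟨hxI, hbx⟩ := hx
  obtain ⟨hyI, hby⟩ := hy
  have hax : a < x := lt_of_lt_of_le hab hbx
  -- Step 1 : φ a < φ x
  have h1 : φ a < φ x := by
    rcases eq_or_lt_of_le (mem_Ici.mp hbx : b ≤ x) with rfl | hbx'
    · exact hφ
    · have hq := qc_aux hI hlsc hpc ha hb hxI hab hbx'
      rcases le_max_iff.1 hq with h | h
      · linarith
      · linarith
  -- Step 2 : φ x ≤ φ y
  have h2 : φ x ≤ φ y := by
    have hq := qc_aux hI hlsc hpc ha hxI hyI hax hxy
    rcases le_max_iff.1 hq with h | h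
    · linarith
    · exact h
  rcases lt_or_eq_of_le h2 with h | heq
  · exact h
  exfalso
  -- φ x = φ y : φ is constant on [x, y], contradicting pseudoconvexity at y towards a
  have hay2 : a < y := hax.trans hxy
  have hay : φ a < φ y := heq ▸ h1
  have hdini : dini φ y (a - y) < 0 := hpc y hyI a ha hay
  have hya : (0:ℝ) < y - a := by linarith
  have hεpos : (0:ℝ) < (y - x) / (y - a) := div_pos (by linarith) hya
  obtain ⟨t, ht, hlt⟩ := dini_desc hdini hεpos
  set z := y + t * (a - y) with hz
  have hz2 : z < y := by
    have : t * (a - y) < 0 := mul_neg_of_pos_of_neg ht.1 (by linarith)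
    simp only [hz]; linarith
  have hz1 : x < z := by
    have h3 : t * (y - a) < y - x := by
      have := (lt_div_iff₀ hya).1 ht.2
      linarith [mul_comm t (y - a)]
    simp only [hz]; nlinarith
  have hzI : z ∈ I := hI.out hxI hyI ⟨hz1.le, hz2.le⟩
  -- φ z = φ x
  have hq1 : φ z ≤ φ x := by
    have hq := qc_aux hI hlsc hpc hxI hzI hyI hz1 hz2
    rwa [← heq, max_self] at hq
  have hq2 : φ x ≤ φ z := by
    have hq := qc_aux hI hlsc hpc ha hxI hzI hax hz1
    rcases le_max_iff.1 hq with h | h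
    · linarith
    · exact h
  -- but φ z < φ y = φ x
  have : φ z < φ y := hlt
  linarith
end

section
/- Let φ : I → R be a lower semicontinuous function on an interval I ⊆ R that is pseudoconvex with respect to the lower Dini derivative. If a, b ∈ I with a < b and φ(a) > φ(b), then φ is strictly monotone decreasing on I ∩ (-∞, a]. -/
open Filter Set

lemma dini_descent {φ : ℝ → ℝ} {s u : ℝ} (h : dini φ s u < 0) {ε : ℝ} (hε : 0 < ε) :
    ∃ h' ∈ Ioo (0:ℝ) ε, φ (s + h' * u) < φ s := by
  by_contra hc
  push_neg at hc
  have hev : ∀ᶠ h' in nhdsWithin (0:ℝ) (Ioi 0), 0 ≤ (φ (s + h' * u) - φ s) / h' := by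
    filter_upwards [Ioo_mem_nhdsGT_of_mem (show (0:ℝ) ∈ Ico (0:ℝ) ε from ⟨le_refl 0, hε⟩)]
      with h' hh'
    exact div_nonneg (sub_nonneg.2 (hc h' hh')) (le_of_lt hh'.1)
  have h0 : (0:ℝ) ≤ dini φ s u := by
    rw [dini, liminf_eq]
    by_cases hbdd : BddAbove {a : ℝ | ∀ᶠ n in nhdsWithin (0:ℝ) (Ioi 0),
        a ≤ (φ (s + n * u) - φ s) / n}
    · exact le_csSup hbdd hev
    · rw [Real.sSup_of_not_bddAbove hbdd]
  linarith

lemma lsc_sublevel_closed {K : Set ℝ} (hKc : IsClosed K) {φ : ℝ → ℝ}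
    (hlsc : LowerSemicontinuousOn φ K) (c : ℝ) : IsClosed {x ∈ K | φ x ≤ c} := by
  apply IsSeqClosed.isClosed
  intro xs x hxs hx
  have hxK : x ∈ K := hKc.isSeqClosed (fun n => (hxs n).1) hx
  refine ⟨hxK, ?_⟩
  by_contra hgt
  push_neg at hgt
  have hev := hlsc x hxK c hgt
  have hx' : Tendsto xs atTop (nhdsWithin x K) :=
    tendsto_nhdsWithin_of_tendsto_nhds_of_eventually_within _ hx
      (Eventually.of_forall fun n => (hxs n).1)
  obtain ⟨n, hn⟩ := (hx'.eventually hev).exists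
  exact absurd (hxs n).2 (not_le.2 hn)

lemma lsc_exists_min {K : Set ℝ} (hK : IsCompact K) (hne : K.Nonempty) {φ : ℝ → ℝ}
    (hlsc : LowerSemicontinuousOn φ K) : ∃ m ∈ K, ∀ t ∈ K, φ m ≤ φ t := by
  have : Nonempty ↥K := hne.to_subtype
  have hint := IsCompact.nonempty_iInter_of_directed_nonempty_isCompact_isClosed
    (fun t : K => {x ∈ K | φ x ≤ φ t})
    (fun t s => by
      rcases le_total (φ t) (φ s) with h | h
      · exact ⟨t, subset_refl _, fun x hx => ⟨hx.1, hx.2.trans h⟩⟩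
      · exact ⟨s, fun x hx => ⟨hx.1, hx.2.trans h⟩, subset_refl _⟩)
    (fun t => ⟨t, t.2, le_refl _⟩)
    (fun t => hK.of_isClosed_subset (lsc_sublevel_closed hK.isClosed hlsc _)
      (sep_subset _ _))
    (fun t => lsc_sublevel_closed hK.isClosed hlsc _)
  obtain ⟨m, hm⟩ := hint
  simp only [mem_iInter] at hm
  exact ⟨m, (hm ⟨hne.some, hne.some_mem⟩).1, fun t ht => (hm ⟨t, ht⟩).2⟩

lemma lsc_quasiconvex (I : Set ℝ) (hI : I.OrdConnected) (φ : ℝ → ℝ)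
    (hlsc : LowerSemicontinuousOn φ I) (hpc : PseudoconvexOn φ I)
    {x z y : ℝ} (hx : x ∈ I) (hy : y ∈ I) (hxz : x < z) (hzy : z < y) :
    φ z ≤ max (φ x) (φ y) := by
  by_contra hM'
  push_neg at hM'
  set M := max (φ x) (φ y) with hMdef
  have hsub : Icc x y ⊆ I := hI.out hx hy
  have hzI : z ∈ I := hsub ⟨hxz.le, hzy.le⟩
  set S := {t ∈ Icc z y | φ t ≤ M} with hS
  have hScl : IsClosed S :=
    lsc_sublevel_closed isClosed_Icc (hlsc.mono (fun t ht => hsub ⟨hxz.le.trans ht.1, ht.2⟩)) M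
  have hScomp : IsCompact S := isCompact_Icc.of_isClosed_subset hScl (sep_subset _ _)
  have hSne : S.Nonempty := ⟨y, ⟨hzy.le, le_refl y⟩, le_max_right _ _⟩
  set β := sInf S with hβdef
  have hβS : β ∈ S := hScomp.sInf_mem hSne
  have hzβ : z < β := by
    rcases lt_or_eq_of_le hβS.1.1 with h | h
    · exact h
    · exact absurd hβS.2 (not_le.2 (h ▸ hM'))
  have hmid : ∀ t, z ≤ t → t < β → M < φ t := by
    intro t h1 h2
    by_contra h
    push_neg at h
    have htS : t ∈ S := ⟨⟨h1, h2.le.trans hβS.1.2⟩, h⟩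
    exact absurd (csInf_le hScomp.bddBelow htS) (not_le.2 h2)
  set d := (z + β) / 2 with hddef
  have hzd : z < d := by simp only [hddef]; linarith
  have hdβ : d < β := by simp only [hddef]; linarith
  have hKsub : Icc z d ⊆ I := fun t ht =>
    hsub ⟨hxz.le.trans ht.1, ht.2.trans (hdβ.le.trans hβS.1.2)⟩
  obtain ⟨m, hmK, hmin⟩ := lsc_exists_min isCompact_Icc (nonempty_Icc.2 hzd.le)
    (hlsc.mono hKsub)
  have hmβ : m < β := lt_of_le_of_lt hmK.2 hdβ
  have hMm : M < φ m := hmid m hmK.1 hmβ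
  have hβI : β ∈ I := hsub ⟨hxz.le.trans hβS.1.1, hβS.1.2⟩
  rcases lt_or_eq_of_le hmK.1 with hzm | hzm
  · -- z < m : descend from m towards x
    have hd : dini φ m (x - m) < 0 :=
      hpc m (hKsub hmK) x hx (lt_of_le_of_lt (le_max_left _ _) hMm)
    have hε : 0 < (m - z) / (m - x) := div_pos (by linarith) (by linarith [hxz.trans hzm])
    obtain ⟨h', ⟨hh0, hhε⟩, hlt⟩ := dini_descent hd hε
    have hxm : x < m := hxz.trans hzm
    have hkey : h' * (m - x) < m - z := (lt_div_iff₀ (by linarith)).1 hhε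
    have hp1 : z < m + h' * (x - m) := by nlinarith
    have hp2 : m + h' * (x - m) < m := by nlinarith
    have := hmin (m + h' * (x - m)) ⟨hp1.le, by linarith [hmK.2]⟩
    linarith
  · -- m = z : descend from z towards β
    have hd : dini φ z (β - z) < 0 :=
      hpc z hzI β hβI (lt_of_le_of_lt hβS.2 (hzm ▸ hMm))
    have hε : 0 < (d - z) / (β - z) := div_pos (by linarith) (by linarith)
    obtain ⟨h', ⟨hh0, hhε⟩, hlt⟩ := dini_descent hd hε
    have hkey : h' * (β - z) < d - z := (lt_div_iff₀ (by linarith)).1 hhε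
    have hp1 : z < z + h' * (β - z) := by nlinarith
    have hp2 : z + h' * (β - z) < d := by linarith
    have hm2 := hmin (z + h' * (β - z)) ⟨hp1.le, hp2.le⟩
    rw [← hzm] at hm2
    linarith

theorem stmt2 (I : Set ℝ) (hI : I.OrdConnected) (φ : ℝ → ℝ)
    (hlsc : LowerSemicontinuousOn φ I) (hpc : PseudoconvexOn φ I)
    (a b : ℝ) (ha : a ∈ I) (hb : b ∈ I) (hab : a < b) (hφ : φ a > φ b) :
    StrictAntiOn φ (I ∩ Iic a) := by
  intro x hx y hy hxy
  obtain ⟨hxI, hxa⟩ := hx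
  obtain ⟨hyI, hya'⟩ := hy
  have hya : y ≤ a := hya'
  have hyb : y < b := lt_of_le_of_lt hya hab
  have hxa' : x < a := lt_of_lt_of_le hxy hya
  have hsub : Icc x b ⊆ I := hI.out hxI hb
  -- φ a ≤ φ x
  have hax : φ a ≤ φ x := by
    have h := lsc_quasiconvex I hI φ hlsc hpc hxI hb hxa' hab
    rcases le_max_iff.1 h with h | h
    · exact h
    · linarith
  -- φ b < φ y
  have hby : φ b < φ y := by
    rcases lt_or_eq_of_le hya with h | h
    · have h2 := lsc_quasiconvex I hI φ hlsc hpc hyI hb h hab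
      rcases le_max_iff.1 h2 with h2 | h2
      · linarith
      · linarith
    · rw [h]; exact hφ
  by_contra hc
  push_neg at hc  -- hc : φ x ≤ φ y
  -- descend from y towards b to find z ∈ (y, b) with φ z < φ y
  have hd : dini φ y (b - y) < 0 := hpc y hyI b hb hby
  obtain ⟨h', ⟨hh0, hh1⟩, hz⟩ := dini_descent hd one_pos
  set z := y + h' * (b - y) with hzdef
  have hyz : y < z := by simp only [hzdef]; nlinarith
  have hzb : z < b := by simp only [hzdef]; nlinarith
  have hzI : z ∈ I := hsub ⟨(hxy.trans hyz).le, hzb.le⟩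
  rcases lt_or_eq_of_le hc with hlt | heq
  · -- φ x < φ y
    have h := lsc_quasiconvex I hI φ hlsc hpc hxI hzI hxy hyz
    rcases le_max_iff.1 h with h | h <;> linarith
  · -- φ x = φ y : descend from x towards z to find w ∈ (x, y)
    have hd2 : dini φ x (z - x) < 0 := hpc x hxI z hzI (by rw [← heq] at hz; exact hz)
    have hε : 0 < (y - x) / (z - x) := div_pos (by linarith) (by linarith)
    obtain ⟨k, ⟨hk0, hkε⟩, hw⟩ := dini_descent hd2 hε
    set w := x + k * (z - x) with hwdef
    have hxw : x < w := by simp only [hwdef]; nlinarith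
    have hwy : w < y := by
      have hkey : k * (z - x) < y - x := (lt_div_iff₀ (by linarith)).1 hkε
      simp only [hwdef]; linarith
    have hwI : w ∈ I := hsub ⟨hxw.le, by linarith⟩
    have h := lsc_quasiconvex I hI φ hlsc hpc hwI hzI hwy hyz
    rcases le_max_iff.1 h with h | h <;> linarith
end

section
/- Let φ : I → R be a lower semicontinuous pseudoconvex function (with respect to the lower Dini derivative) on an interval I ⊆ R. If the set Î of global minimizers of φ over I is empty, then φ is strictly monotone (either strictly increasing on all of I or strictly decreasing on all of I). -/
open Filter Set

/-- A negative lower Dini derivative yields arbitrarily small descent steps. -/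
lemma my_descent {φ : ℝ → ℝ} {s u : ℝ} (h : dini φ s u < 0) {δ : ℝ} (hδ : 0 < δ) :
    ∃ k : ℝ, 0 < k ∧ k < δ ∧ φ (s + k * u) < φ s := by
  set f : ℝ → ℝ := fun k => (φ (s + k * u) - φ s) / k with hf
  have hfreq : ∃ᶠ k in nhdsWithin 0 (Ioi 0), f k < 0 := by
    by_contra hc
    rw [not_frequently] at hc
    have hev : ∀ᶠ k in nhdsWithin (0:ℝ) (Ioi 0), (0:ℝ) ≤ f k := hc.mono (fun k hk => not_lt.1 hk)
    have h0 : (0:ℝ) ∈ {a : ℝ | ∀ᶠ k in nhdsWithin (0:ℝ) (Ioi 0), a ≤ f k} := hev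
    have hle : dini φ s u = sSup {a : ℝ | ∀ᶠ k in nhdsWithin (0:ℝ) (Ioi 0), a ≤ f k} :=
      Filter.liminf_eq
    by_cases hb : BddAbove {a : ℝ | ∀ᶠ k in nhdsWithin (0:ℝ) (Ioi 0), a ≤ f k}
    · have := le_csSup hb h0
      rw [← hle] at this; linarith
    · rw [Real.sSup_of_not_bddAbove hb] at hle; linarith
  have hev2 : ∀ᶠ k in nhdsWithin (0:ℝ) (Ioi 0), k ∈ Ioo (0:ℝ) δ :=
    Ioo_mem_nhdsGT_of_mem ⟨le_refl 0, hδ⟩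
  obtain ⟨k, hk1, hk2⟩ := (hfreq.and_eventually hev2).exists
  refine ⟨k, hk2.1, hk2.2, ?_⟩
  have hkpos : 0 < k := hk2.1
  have : φ (s + k * u) - φ s < 0 := by
    have h2 : (φ (s + k * u) - φ s) = f k * k := by rw [hf]; field_simp [hkpos.ne']
    nlinarith
  linarith

/-- A lower semicontinuous function on a compact interval cannot admit a strict
descent point inside the interval for every point of the interval. -/
lemma my_nodesc {φ : ℝ → ℝ} {I : Set ℝ} (hlsc : LowerSemicontinuousOn φ I) {a b : ℝ}
    (hab : a ≤ b) (hJI : Icc a b ⊆ I)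
    (H : ∀ z ∈ Icc a b, ∃ y ∈ Icc a b, φ y < φ z) : False := by
  have key : ∀ z : Icc a b, ∃ U : Set ℝ, IsOpen U ∧ (z : ℝ) ∈ U ∧
      ∃ w ∈ Icc a b, ∀ x ∈ U ∩ I, φ w < φ x := by
    rintro ⟨z, hz⟩
    obtain ⟨w, hw, hwlt⟩ := H z hz
    have hlz : LowerSemicontinuousWithinAt φ I z := hlsc z (hJI hz)
    have hev : ∀ᶠ x in nhdsWithin z I, φ w < φ x := hlz (φ w) hwlt
    rw [eventually_iff, mem_nhdsWithin] at hev
    obtain ⟨U, hUo, hzU, hUsub⟩ := hev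
    exact ⟨U, hUo, hzU, w, hw, fun x hx => hUsub hx⟩
  choose U hUo hzU w hw hwlt using key
  have hcover : Icc a b ⊆ ⋃ i, U i := fun x hx => mem_iUnion.2 ⟨⟨x, hx⟩, hzU _⟩
  obtain ⟨t, ht⟩ := isCompact_Icc.elim_finite_subcover U hUo hcover
  have hane : a ∈ Icc a b := ⟨le_refl a, hab⟩
  obtain ⟨i0, hi0, _⟩ := mem_iUnion₂.1 (ht hane)
  obtain ⟨imin, himin, hmin⟩ := Finset.exists_min_image t (fun i => φ (w i)) ⟨i0, hi0⟩
  obtain ⟨j, hj, hwj⟩ := mem_iUnion₂.1 (ht (hw imin))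
  have h1 : φ (w j) < φ (w imin) := hwlt j (w imin) ⟨hwj, hJI (hw imin)⟩
  have h2 : φ (w imin) ≤ φ (w j) := hmin j hj
  linarith

/-- Descent towards a point on the right, staying below a given bound. -/
lemma my_descend_right {φ : ℝ → ℝ} {I : Set ℝ} (hpc : PseudoconvexOn φ I)
    {s t c : ℝ} (hs : s ∈ I) (ht : t ∈ I) (hlt : φ t < φ s) (hsc : s < c) (hct : c ≤ t) :
    ∃ y : ℝ, s < y ∧ y < c ∧ φ y < φ s := by
  have hd : dini φ s (t - s) < 0 := hpc s hs t ht hlt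
  have hts : 0 < t - s := by linarith
  have hδ : 0 < (c - s) / (t - s) := div_pos (by linarith) hts
  obtain ⟨k, hk0, hkδ, hky⟩ := my_descent hd hδ
  have h' : k * (t - s) < c - s := (lt_div_iff₀ hts).1 hkδ
  exact ⟨s + k * (t - s), by nlinarith, by linarith, hky⟩

/-- Descent towards a point on the left, staying above a given bound. -/
lemma my_descend_left {φ : ℝ → ℝ} {I : Set ℝ} (hpc : PseudoconvexOn φ I)
    {s t c : ℝ} (hs : s ∈ I) (ht : t ∈ I) (hlt : φ t < φ s) (hcs : c < s) (htc : t ≤ c) :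
    ∃ y : ℝ, c < y ∧ y < s ∧ φ y < φ s := by
  have hd : dini φ s (t - s) < 0 := hpc s hs t ht hlt
  have hts : t - s < 0 := by linarith
  have hδ : 0 < (c - s) / (t - s) := div_pos_of_neg_of_neg (by linarith) hts
  obtain ⟨k, hk0, hkδ, hky⟩ := my_descent hd hδ
  have h' : c - s < k * (t - s) := (lt_div_iff_of_neg hts).1 hkδ
  exact ⟨s + k * (t - s), by linarith, by nlinarith, hky⟩

/-- No interior point is at or below the minimum of the endpoint values. -/
lemma my_step2 {φ : ℝ → ℝ} {I : Set ℝ} (hI : I.OrdConnected)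
    (hlsc : LowerSemicontinuousOn φ I) (hpc : PseudoconvexOn φ I)
    (hne : ∀ x ∈ I, ∃ r ∈ I, φ r < φ x)
    {a b x : ℝ} (ha : a ∈ I) (hb : b ∈ I) (hx : x ∈ Ioo a b) :
    min (φ a) (φ b) < φ x := by
  by_contra hmin
  push_neg at hmin
  have hab : a ≤ b := le_of_lt (lt_trans hx.1 hx.2)
  have hJI : Icc a b ⊆ I := hI.out ha hb
  have hxJ : x ∈ Icc a b := ⟨le_of_lt hx.1, le_of_lt hx.2⟩
  have hxI : x ∈ I := hJI hxJ
  have hxa : φ x ≤ φ a := le_trans hmin (min_le_left _ _)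
  have hxb : φ x ≤ φ b := le_trans hmin (min_le_right _ _)
  refine my_nodesc hlsc hab hJI ?_
  intro z hz
  have hzI : z ∈ I := hJI hz
  obtain ⟨r, hr, hrz⟩ := hne z hzI
  by_cases hrJ : r ∈ Icc a b
  · exact ⟨r, hrJ, hrz⟩
  · have hrout : r < a ∨ b < r := by
      rcases lt_or_ge r a with h | h
      · exact Or.inl h
      · exact Or.inr (lt_of_not_ge (fun hh => hrJ ⟨h, hh⟩))
    rcases hrout with hra | hbr
    · by_cases hza : a < z
      · obtain ⟨y, hy1, hy2, hy3⟩ := my_descend_left hpc hzI hr hrz hza (le_of_lt hra)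
        exact ⟨y, ⟨le_of_lt hy1, le_trans (le_of_lt hy2) hz.2⟩, hy3⟩
      · have hza' : z = a := le_antisymm (not_lt.1 hza) hz.1
        rcases lt_or_eq_of_le hxa with hlt | heq
        · exact ⟨x, hxJ, by rw [hza']; exact hlt⟩
        · have hrx : φ r < φ x := by rw [heq, ← hza']; exact hrz
          obtain ⟨y, hy1, hy2, hy3⟩ := my_descend_left hpc hxI hr hrx hx.1 (le_of_lt hra)
          exact ⟨y, ⟨le_of_lt hy1, le_of_lt (lt_trans hy2 hx.2)⟩,
            by rw [hza', ← heq]; exact hy3⟩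
    · by_cases hzb : z < b
      · obtain ⟨y, hy1, hy2, hy3⟩ := my_descend_right hpc hzI hr hrz hzb (le_of_lt hbr)
        exact ⟨y, ⟨le_trans hz.1 (le_of_lt hy1), le_of_lt hy2⟩, hy3⟩
      · have hzb' : z = b := le_antisymm hz.2 (not_lt.1 hzb)
        rcases lt_or_eq_of_le hxb with hlt | heq
        · exact ⟨x, hxJ, by rw [hzb']; exact hlt⟩
        · have hrx : φ r < φ x := by rw [heq, ← hzb']; exact hrz
          obtain ⟨y, hy1, hy2, hy3⟩ := my_descend_right hpc hxI hr hrx hx.2 (le_of_lt hbr)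
          exact ⟨y, ⟨le_of_lt (lt_trans hx.1 hy1), le_of_lt hy2⟩,
            by rw [hzb', ← heq]; exact hy3⟩

/-- Quasiconvexity: no interior point exceeds the maximum of the endpoint values. -/
lemma my_step3 {φ : ℝ → ℝ} {I : Set ℝ} (hI : I.OrdConnected)
    (hlsc : LowerSemicontinuousOn φ I) (hpc : PseudoconvexOn φ I)
    {a b x : ℝ} (ha : a ∈ I) (hb : b ∈ I) (hx : x ∈ Ioo a b) :
    φ x ≤ max (φ a) (φ b) := by
  by_contra hc
  push_neg at hc
  set c : ℝ := max (φ a) (φ b) with hcdef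
  have hca : φ a ≤ c := le_max_left _ _
  have hcb : φ b ≤ c := le_max_right _ _
  have hJI : Icc a b ⊆ I := hI.out ha hb
  have hxb : x ≤ b := le_of_lt hx.2
  have hsub : Icc x b ⊆ Icc a b := Icc_subset_Icc (le_of_lt hx.1) (le_refl b)
  set C : Set ℝ := {y | y ∈ Icc x b ∧ φ y ≤ c} with hCdef
  have hbC : b ∈ C := ⟨⟨hxb, le_refl b⟩, hcb⟩
  have hCne : C.Nonempty := ⟨b, hbC⟩
  have hCbdd : BddBelow C := ⟨x, fun y hy => hy.1.1⟩
  set β : ℝ := sInf C with hβdef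
  have hβmem : β ∈ Icc x b := ⟨le_csInf hCne (fun y hy => hy.1.1), csInf_le hCbdd hbC⟩
  have hβI : β ∈ I := hJI ⟨le_trans (le_of_lt hx.1) hβmem.1, hβmem.2⟩
  have hβc : φ β ≤ c := by
    by_contra hβc
    push_neg at hβc
    have hev : ∀ᶠ y in nhdsWithin β I, c < φ y := hlsc β hβI c hβc
    rw [eventually_iff, Metric.mem_nhdsWithin_iff] at hev
    obtain ⟨ε, hε, hball⟩ := hev
    have hexists : ∃ y ∈ C, y < β + ε := by
      by_contra hno
      push_neg at hno
      have : β + ε ≤ β := le_csInf hCne (fun y hy => hno y hy)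
      linarith
    obtain ⟨y, hyC, hyε⟩ := hexists
    have hβy : β ≤ y := csInf_le hCbdd hyC
    have hyI : y ∈ I := hJI (hsub hyC.1)
    have : c < φ y := hball ⟨Metric.mem_ball.2 (by rw [Real.dist_eq]; rw [abs_lt]; constructor <;> linarith), hyI⟩
    linarith [hyC.2]
  have hxβ : x < β := lt_of_le_of_ne hβmem.1 (fun h => by rw [← h] at hβc; linarith)
  set y2 : ℝ := (x + β) / 2 with hy2def
  have hy2 : x < y2 ∧ y2 < β := ⟨by linarith, by linarith⟩
  have hJsub : Icc x y2 ⊆ Icc a b := Icc_subset_Icc (le_of_lt hx.1)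
    (le_trans (le_of_lt hy2.2) hβmem.2)
  have hJI2 : Icc x y2 ⊆ I := fun z hz => hJI (hJsub hz)
  have hgt : ∀ z ∈ Icc x y2, c < φ z := by
    intro z hz
    by_contra hzc
    push_neg at hzc
    have hzC : z ∈ C := ⟨⟨hz.1, le_trans hz.2 (le_trans (le_of_lt hy2.2) hβmem.2)⟩, hzc⟩
    have : β ≤ z := csInf_le hCbdd hzC
    have : z ≤ y2 := hz.2
    linarith [hy2.2]
  refine my_nodesc hlsc (le_of_lt hy2.1) hJI2 ?_
  intro z hz
  have hzI : z ∈ I := hJI2 hz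
  have hgz : c < φ z := hgt z hz
  by_cases hzy2 : z < y2
  · have hbz : φ b < φ z := lt_of_le_of_lt hcb hgz
    obtain ⟨y, hy1, hy2', hy3⟩ := my_descend_right hpc hzI hb hbz hzy2
      (le_trans (le_of_lt hy2.2) hβmem.2)
    exact ⟨y, ⟨le_trans hz.1 (le_of_lt hy1), le_of_lt hy2'⟩, hy3⟩
  · have hzy2' : z = y2 := le_antisymm hz.2 (not_lt.1 hzy2)
    have haz : φ a < φ z := lt_of_le_of_lt hca hgz
    have hxz : x < z := by rw [hzy2']; exact hy2.1
    obtain ⟨y, hy1, hy2', hy3⟩ := my_descend_left hpc hzI ha haz hxz (le_of_lt hx.1)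
    exact ⟨y, ⟨le_of_lt hy1, le_trans (le_of_lt hy2') (by rw [hzy2'])⟩, hy3⟩

/-- Injectivity of `φ` on `I`. -/
lemma my_inj {φ : ℝ → ℝ} {I : Set ℝ} (hI : I.OrdConnected)
    (hlsc : LowerSemicontinuousOn φ I) (hpc : PseudoconvexOn φ I)
    (hne : ∀ x ∈ I, ∃ r ∈ I, φ r < φ x) :
    ∀ a ∈ I, ∀ b ∈ I, a < b → φ a ≠ φ b := by
  intro a ha b hb hab heq
  have hxm : (a + b) / 2 ∈ Ioo a b := ⟨by linarith, by linarith⟩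
  have h1 := my_step2 hI hlsc hpc hne ha hb hxm
  have h2 := my_step3 hI hlsc hpc ha hb hxm
  rw [heq] at h1 h2
  simp only [min_self, max_self] at h1 h2
  linarith

/-- Trichotomy for triples. -/
lemma my_trip {φ : ℝ → ℝ} {I : Set ℝ} (hI : I.OrdConnected)
    (hlsc : LowerSemicontinuousOn φ I) (hpc : PseudoconvexOn φ I)
    (hne : ∀ x ∈ I, ∃ r ∈ I, φ r < φ x) :
    ∀ a ∈ I, ∀ x ∈ I, ∀ b ∈ I, a < x → x < b →
      (φ a < φ x ∧ φ x < φ b) ∨ (φ x < φ a ∧ φ b < φ x) := by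
  intro a ha x hx b hb hax hxb
  have hab : a < b := lt_trans hax hxb
  have h1 := my_step2 hI hlsc hpc hne ha hb (⟨hax, hxb⟩ : x ∈ Ioo a b)
  have h2 := my_step3 hI hlsc hpc ha hb (⟨hax, hxb⟩ : x ∈ Ioo a b)
  have hxa := my_inj hI hlsc hpc hne a ha x hx hax
  have hxb' := my_inj hI hlsc hpc hne x hx b hb hxb
  rcases lt_trichotomy (φ a) (φ b) with h | h | h
  · left
    rw [min_eq_left (le_of_lt h)] at h1
    rw [max_eq_right (le_of_lt h)] at h2
    exact ⟨h1, lt_of_le_of_ne h2 hxb'⟩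
  · exact absurd h (my_inj hI hlsc hpc hne a ha b hb hab)
  · right
    rw [min_eq_right (le_of_lt h)] at h1
    rw [max_eq_left (le_of_lt h)] at h2
    exact ⟨lt_of_le_of_ne h2 (Ne.symm hxa), h1⟩

/-- Order transfer: increasing on an enclosing pair transfers to inner pairs. -/
lemma my_transfer_mono {φ : ℝ → ℝ} {I : Set ℝ} (hI : I.OrdConnected)
    (hlsc : LowerSemicontinuousOn φ I) (hpc : PseudoconvexOn φ I)
    (hne : ∀ x ∈ I, ∃ r ∈ I, φ r < φ x) :
    ∀ p ∈ I, ∀ q ∈ I, ∀ a ∈ I, ∀ b ∈ I,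
      p ≤ a → a < b → b ≤ q → φ p < φ q → φ a < φ b := by
  intro p hp q hq a ha b hb hpa hab hbq hpq
  rcases eq_or_lt_of_le hpa with hpa' | hpa'
  · rcases eq_or_lt_of_le hbq with hbq' | hbq'
    · rw [← hpa', hbq']; exact hpq
    · rcases my_trip hI hlsc hpc hne a ha b hb q hq hab hbq' with h | h
      · exact h.1
      · have e : φ p = φ a := by rw [hpa']
        linarith [h.1, h.2]
  · rcases eq_or_lt_of_le hbq with hbq' | hbq'
    · rcases my_trip hI hlsc hpc hne p hp a ha b hb hpa' hab with h | h
      · exact h.2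
      · have e : φ b = φ q := by rw [hbq']
        linarith [h.1, h.2]
    · have h1 : φ p < φ a ∧ φ a < φ q := by
        rcases my_trip hI hlsc hpc hne p hp a ha q hq hpa' (lt_trans hab hbq') with h | h
        · exact h
        · linarith [h.1, h.2]
      rcases my_trip hI hlsc hpc hne a ha b hb q hq hab hbq' with h | h
      · exact h.1
      · linarith [h.2, h1.2]

/-- Order transfer: decreasing on an enclosing pair transfers to inner pairs. -/
lemma my_transfer_anti {φ : ℝ → ℝ} {I : Set ℝ} (hI : I.OrdConnected)
    (hlsc : LowerSemicontinuousOn φ I) (hpc : PseudoconvexOn φ I)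
    (hne : ∀ x ∈ I, ∃ r ∈ I, φ r < φ x) :
    ∀ p ∈ I, ∀ q ∈ I, ∀ a ∈ I, ∀ b ∈ I,
      p ≤ a → a < b → b ≤ q → φ q < φ p → φ b < φ a := by
  intro p hp q hq a ha b hb hpa hab hbq hpq
  rcases eq_or_lt_of_le hpa with hpa' | hpa'
  · rcases eq_or_lt_of_le hbq with hbq' | hbq'
    · rw [← hpa', hbq']; exact hpq
    · rcases my_trip hI hlsc hpc hne a ha b hb q hq hab hbq' with h | h
      · have e : φ p = φ a := by rw [hpa']
        linarith [h.1, h.2]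
      · exact h.1
  · rcases eq_or_lt_of_le hbq with hbq' | hbq'
    · rcases my_trip hI hlsc hpc hne p hp a ha b hb hpa' hab with h | h
      · have e : φ b = φ q := by rw [hbq']
        linarith [h.1, h.2]
      · exact h.2
    · have h1 : φ a < φ p ∧ φ q < φ a := by
        rcases my_trip hI hlsc hpc hne p hp a ha q hq hpa' (lt_trans hab hbq') with h | h
        · linarith [h.1, h.2]
        · exact h
      rcases my_trip hI hlsc hpc hne a ha b hb q hq hab hbq' with h | h
      · linarith [h.1, h1.2]
      · exact h.1

theorem stmt4 (I : Set ℝ) (hI : I.OrdConnected) (φ : ℝ → ℝ)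
    (hlsc : LowerSemicontinuousOn φ I) (hpc : PseudoconvexOn φ I)
    (hempty : ArgminSet φ I = ∅) :
    StrictMonoOn φ I ∨ StrictAntiOn φ I := by
  have hne : ∀ x ∈ I, ∃ r ∈ I, φ r < φ x := by
    intro x hx
    have hnot : x ∉ ArgminSet φ I := by rw [hempty]; exact notMem_empty x
    rw [ArgminSet, mem_sep_iff] at hnot
    push_neg at hnot
    obtain ⟨r, hr, hlt⟩ := hnot hx
    exact ⟨r, hr, hlt⟩
  by_cases H : ∃ a ∈ I, ∃ b ∈ I, a < b ∧ φ a < φ b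
  · left
    obtain ⟨a, ha, b, hb, hab, hfab⟩ := H
    intro c hc d hd hcd
    set p := min a c with hp
    set q := max b d with hq
    have hpI : p ∈ I := by rcases min_cases a c with ⟨h, _⟩ | ⟨h, _⟩ <;> rw [hp, h] <;> assumption
    have hqI : q ∈ I := by rcases max_cases b d with ⟨h, _⟩ | ⟨h, _⟩ <;> rw [hq, h] <;> assumption
    have hpq : p < q := lt_of_le_of_lt (min_le_left a c) (lt_of_lt_of_le hab (le_max_left b d))
    have hpqv : φ p < φ q := by
      rcases lt_trichotomy (φ p) (φ q) with h | h | h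
      · exact h
      · exact absurd h (my_inj hI hlsc hpc hne p hpI q hqI hpq)
      · exact absurd (my_transfer_anti hI hlsc hpc hne p hpI q hqI a ha b hb (min_le_left a c)
          hab (le_max_left b d) h) (not_lt.2 (le_of_lt hfab))
    exact my_transfer_mono hI hlsc hpc hne p hpI q hqI c hc d hd (min_le_right a c) hcd
      (le_max_right b d) hpqv
  · right
    push_neg at H
    intro c hc d hd hcd
    rcases lt_trichotomy (φ c) (φ d) with h | h | h
    · linarith [H c hc d hd hcd]
    · exact absurd h (my_inj hI hlsc hpc hne c hc d hd hcd)
    · exact h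
end

section
/- Let φ : I → R be a lower semicontinuous function on an interval I ⊆ R, and let Î be the set of global minimizers of φ over I. Then φ is pseudoconvex with respect to the lower Dini derivative if and only if: (i) either Î = ∅ and φ is strictly monotone on I, or Î is a nonempty interval on which φ is constant, with φ strictly increasing on I₊ = {t ∈ I : t ≥ s for all s ∈ Î} and strictly decreasing on I₋ = {t ∈ I : t ≤ s for all s ∈ Î}; and (ii) φ has no stationary points in I \ Î. -/
open Filter Set

/-! ### Auxiliary lemmas -/

lemma liminf_nonneg_aux {f : ℝ → ℝ} {l : Filter ℝ} (h : ∀ᶠ x in l, 0 ≤ f x) :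
    0 ≤ liminf f l := by
  rw [liminf_eq]
  by_cases hb : BddAbove {a : ℝ | ∀ᶠ x in l, a ≤ f x}
  · exact le_csSup hb h
  · rw [csSup_of_not_bddAbove hb, Real.sSup_empty]

lemma dini_nonneg_of_eventually {φ : ℝ → ℝ} {s u : ℝ}
    (h : ∀ᶠ x in nhdsWithin (0:ℝ) (Ioi 0), φ s ≤ φ (s + x * u)) : 0 ≤ dini φ s u := by
  apply liminf_nonneg_aux
  filter_upwards [h, self_mem_nhdsWithin] with x hx hx0
  rw [mem_Ioi] at hx0
  exact div_nonneg (by linarith) hx0.le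

lemma frequently_lt_of_dini_neg {φ : ℝ → ℝ} {s u : ℝ} (h : dini φ s u < 0) :
    ∃ᶠ x in nhdsWithin (0:ℝ) (Ioi 0), φ (s + x * u) < φ s := by
  by_contra hc
  rw [not_frequently] at hc
  have : 0 ≤ dini φ s u := dini_nonneg_of_eventually (hc.mono fun x hx => not_lt.mp hx)
  linarith

lemma dini_zero (φ : ℝ → ℝ) (s : ℝ) : dini φ s 0 = 0 := by
  unfold dini
  simp only [mul_zero, add_zero, sub_self, zero_div]
  exact liminf_const 0

lemma descent_right {φ : ℝ → ℝ} {s u : ℝ} (h : dini φ s u < 0) (hu : 0 < u) :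
    ∀ ε > 0, ∃ z ∈ Ioo s (s + ε), φ z < φ s := by
  intro ε hε
  have hf := frequently_lt_of_dini_neg h
  set δ := ε / u with hδdef
  have hδ : 0 < δ := div_pos hε hu
  have hev : Ioo (0:ℝ) δ ∈ nhdsWithin (0:ℝ) (Ioi 0) :=
    Ioo_mem_nhdsGT_of_mem ⟨le_refl 0, hδ⟩
  obtain ⟨x, hx1, hx2⟩ := (hf.and_eventually (eventually_of_mem hev (fun y hy => hy))).exists
  have hxu : x * u < ε := by
    have := mul_lt_mul_of_pos_right hx2.2 hu
    rwa [hδdef, div_mul_cancel₀ _ hu.ne'] at this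
  exact ⟨s + x * u, ⟨by nlinarith [hx2.1], by linarith⟩, hx1⟩

lemma descent_left {φ : ℝ → ℝ} {s u : ℝ} (h : dini φ s u < 0) (hu : u < 0) :
    ∀ ε > 0, ∃ z ∈ Ioo (s - ε) s, φ z < φ s := by
  intro ε hε
  have hf := frequently_lt_of_dini_neg h
  have hu' : 0 < -u := by linarith
  set δ := ε / (-u) with hδdef
  have hδ : 0 < δ := div_pos hε hu'
  have hev : Ioo (0:ℝ) δ ∈ nhdsWithin (0:ℝ) (Ioi 0) :=
    Ioo_mem_nhdsGT_of_mem ⟨le_refl 0, hδ⟩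
  obtain ⟨x, hx1, hx2⟩ := (hf.and_eventually (eventually_of_mem hev (fun y hy => hy))).exists
  have hxu : x * (-u) < ε := by
    have := mul_lt_mul_of_pos_right hx2.2 hu'
    rwa [hδdef, div_mul_cancel₀ _ hu'.ne'] at this
  exact ⟨s + x * u, ⟨by nlinarith [hx2.1], by nlinarith [hx2.1]⟩, hx1⟩

lemma lsc_le_of_closure {I : Set ℝ} {φ : ℝ → ℝ} (hlsc : LowerSemicontinuousOn φ I)
    {K : Set ℝ} {c : ℝ} (hKI : K ⊆ I) (hKc : ∀ z ∈ K, φ z ≤ c)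
    {w : ℝ} (hwI : w ∈ I) (hw : w ∈ closure K) : φ w ≤ c := by
  by_contra hlt
  push_neg at hlt
  have hev : ∀ᶠ z in nhdsWithin w I, c < φ z := hlsc w hwI c hlt
  have hne : (nhdsWithin w K).NeBot := mem_closure_iff_nhdsWithin_neBot.mp hw
  have hev' : ∀ᶠ z in nhdsWithin w K, c < φ z := (nhdsWithin_mono w hKI) hev
  have hmem : ∀ᶠ z in nhdsWithin w K, z ∈ K := eventually_mem_nhdsWithin
  obtain ⟨z, hz1, hz2⟩ := (hev'.and hmem).exists
  exact absurd (hKc z hz2) (not_le.mpr hz1)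

lemma lsc_sSup_mem {I : Set ℝ} {φ : ℝ → ℝ} (hlsc : LowerSemicontinuousOn φ I)
    {p q c : ℝ} (hsub : Icc p q ⊆ I)
    (hne : {z | z ∈ Icc p q ∧ φ z ≤ c}.Nonempty) :
    sSup {z | z ∈ Icc p q ∧ φ z ≤ c} ∈ Icc p q ∧
      φ (sSup {z | z ∈ Icc p q ∧ φ z ≤ c}) ≤ c := by
  have hKI : {z | z ∈ Icc p q ∧ φ z ≤ c} ⊆ Icc p q := fun z hz => hz.1
  have hbdd : BddAbove {z | z ∈ Icc p q ∧ φ z ≤ c} := BddAbove.mono hKI bddAbove_Icc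
  obtain ⟨z0, hz0⟩ := hne
  have hmem : sSup {z | z ∈ Icc p q ∧ φ z ≤ c} ∈ Icc p q :=
    ⟨le_trans hz0.1.1 (le_csSup hbdd hz0), csSup_le ⟨z0, hz0⟩ (fun z hz => hz.1.2)⟩
  exact ⟨hmem, lsc_le_of_closure hlsc (fun z hz => hsub hz.1) (fun z hz => hz.2)
    (hsub hmem) (csSup_mem_closure ⟨z0, hz0⟩ hbdd)⟩

lemma lsc_sInf_mem {I : Set ℝ} {φ : ℝ → ℝ} (hlsc : LowerSemicontinuousOn φ I)
    {p q c : ℝ} (hsub : Icc p q ⊆ I)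
    (hne : {z | z ∈ Icc p q ∧ φ z ≤ c}.Nonempty) :
    sInf {z | z ∈ Icc p q ∧ φ z ≤ c} ∈ Icc p q ∧
      φ (sInf {z | z ∈ Icc p q ∧ φ z ≤ c}) ≤ c := by
  have hKI : {z | z ∈ Icc p q ∧ φ z ≤ c} ⊆ Icc p q := fun z hz => hz.1
  have hbdd : BddBelow {z | z ∈ Icc p q ∧ φ z ≤ c} := BddBelow.mono hKI bddBelow_Icc
  obtain ⟨z0, hz0⟩ := hne
  have hmem : sInf {z | z ∈ Icc p q ∧ φ z ≤ c} ∈ Icc p q :=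
    ⟨le_csInf ⟨z0, hz0⟩ (fun z hz => hz.1.1), le_trans (csInf_le hbdd hz0) hz0.1.2⟩
  exact ⟨hmem, lsc_le_of_closure hlsc (fun z hz => hsub hz.1) (fun z hz => hz.2)
    (hsub hmem) (csInf_mem_closure ⟨z0, hz0⟩ hbdd)⟩

/-- If at every point of `[p,q)` there are descent points arbitrarily close to the right,
then a lower semicontinuous function is strictly decreasing on `[p,q]`. -/
lemma key_D {I : Set ℝ} {φ : ℝ → ℝ} (hlsc : LowerSemicontinuousOn φ I)
    {p q : ℝ} (hsub : Icc p q ⊆ I)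
    (H : ∀ y ∈ Ico p q, ∀ ε > 0, ∃ z ∈ Ioo y (y + ε), φ z < φ y) :
    StrictAntiOn φ (Icc p q) := by
  have key : ∀ y ∈ Icc p q, ∀ y' ∈ Icc p q, y < y' → φ y' ≤ φ y := by
    intro y hy y' hy' hlt
    by_contra hgt
    push_neg at hgt
    set c := (φ y + φ y') / 2 with hc
    have hsub' : Icc y y' ⊆ Icc p q := Icc_subset_Icc hy.1 hy'.2
    have hne : {z | z ∈ Icc y y' ∧ φ z ≤ c}.Nonempty :=
      ⟨y, ⟨left_mem_Icc.mpr hlt.le, by rw [hc]; linarith⟩⟩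
    obtain ⟨hwmem, hwc⟩ := lsc_sSup_mem hlsc (hsub'.trans hsub) hne
    set w := sSup {z | z ∈ Icc y y' ∧ φ z ≤ c} with hwdef
    have hwy' : w < y' := by
      rcases lt_or_eq_of_le hwmem.2 with h | h
      · exact h
      · rw [h] at hwc; rw [hc] at hwc; linarith
    obtain ⟨z, hz, hzφ⟩ := H w ⟨le_trans hy.1 hwmem.1, lt_of_lt_of_le hwy' hy'.2⟩
      (y' - w) (by linarith)
    have hzK : z ∈ {z | z ∈ Icc y y' ∧ φ z ≤ c} := by
      refine ⟨⟨le_trans hwmem.1 hz.1.le, ?_⟩, le_trans hzφ.le hwc⟩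
      have := hz.2; linarith
    have hbdd : BddAbove {z | z ∈ Icc y y' ∧ φ z ≤ c} :=
      BddAbove.mono (fun a ha => ha.1) bddAbove_Icc
    have : z ≤ w := le_csSup hbdd hzK
    linarith [hz.1]
  intro y hy y' hy' hlt
  obtain ⟨z, hz, hzφ⟩ := H y ⟨hy.1, lt_of_lt_of_le hlt hy'.2⟩ (y' - y) (by linarith)
  have hz2 : z < y' := by have := hz.2; linarith
  have := key z ⟨le_trans hy.1 hz.1.le, le_trans hz2.le hy'.2⟩ y' hy' hz2
  linarith

/-- Mirror of `key_D`: descent points to the left force strict increase. -/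
lemma key_D' {I : Set ℝ} {φ : ℝ → ℝ} (hlsc : LowerSemicontinuousOn φ I)
    {p q : ℝ} (hsub : Icc p q ⊆ I)
    (H : ∀ y ∈ Ioc p q, ∀ ε > 0, ∃ z ∈ Ioo (y - ε) y, φ z < φ y) :
    StrictMonoOn φ (Icc p q) := by
  have key : ∀ y ∈ Icc p q, ∀ y' ∈ Icc p q, y < y' → φ y ≤ φ y' := by
    intro y hy y' hy' hlt
    by_contra hgt
    push_neg at hgt
    set c := (φ y + φ y') / 2 with hc
    have hsub' : Icc y y' ⊆ Icc p q := Icc_subset_Icc hy.1 hy'.2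
    have hne : {z | z ∈ Icc y y' ∧ φ z ≤ c}.Nonempty :=
      ⟨y', ⟨right_mem_Icc.mpr hlt.le, by rw [hc]; linarith⟩⟩
    obtain ⟨hwmem, hwc⟩ := lsc_sInf_mem hlsc (hsub'.trans hsub) hne
    set w := sInf {z | z ∈ Icc y y' ∧ φ z ≤ c} with hwdef
    have hyw : y < w := by
      rcases lt_or_eq_of_le hwmem.1 with h | h
      · exact h
      · rw [← h] at hwc; rw [hc] at hwc; linarith
    obtain ⟨z, hz, hzφ⟩ := H w ⟨lt_of_le_of_lt hy.1 hyw, le_trans hwmem.2 hy'.2⟩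
      (w - y) (by linarith)
    have hzK : z ∈ {z | z ∈ Icc y y' ∧ φ z ≤ c} := by
      refine ⟨⟨?_, le_trans hz.2.le hwmem.2⟩, le_trans hzφ.le hwc⟩
      have := hz.1; linarith
    have hbdd : BddBelow {z | z ∈ Icc y y' ∧ φ z ≤ c} :=
      BddBelow.mono (fun a ha => ha.1) bddBelow_Icc
    have : w ≤ z := csInf_le hbdd hzK
    linarith [hz.2]
  intro y hy y' hy' hlt
  obtain ⟨z, hz, hzφ⟩ := H y' ⟨lt_of_le_of_lt hy.1 hlt, hy'.2⟩ (y' - y) (by linarith)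
  have hz1 : y < z := by have := hz.1; linarith
  have := key y hy z ⟨le_trans hy.1 hz1.le, le_trans hz.2.le hy'.2⟩ hz1
  linarith

/-- A lower semicontinuous function attains its minimum on a compact interval. -/
lemma exists_min_Icc {I : Set ℝ} {φ : ℝ → ℝ} (hlsc : LowerSemicontinuousOn φ I)
    {p q : ℝ} (hpq : p ≤ q) (hsub : Icc p q ⊆ I) :
    ∃ m ∈ Icc p q, ∀ y ∈ Icc p q, φ m ≤ φ y := by
  have hclosed : ∀ c : ℝ, IsClosed {z | z ∈ Icc p q ∧ φ z ≤ c} := by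
    intro c
    apply isClosed_of_closure_subset
    intro z hz
    have hzIcc : z ∈ Icc p q := by
      have h1 : closure {z | z ∈ Icc p q ∧ φ z ≤ c} ⊆ closure (Icc p q) :=
        closure_mono (fun a ha => ha.1)
      have := h1 hz
      rwa [isClosed_Icc.closure_eq] at this
    exact ⟨hzIcc, lsc_le_of_closure hlsc (fun a ha => hsub ha.1) (fun a ha => ha.2)
      (hsub hzIcc) hz⟩
  haveI : Nonempty {c : ℝ // ∃ z ∈ Icc p q, φ z ≤ c} :=
    ⟨⟨φ p, ⟨p, left_mem_Icc.mpr hpq, le_refl _⟩⟩⟩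
  have hdir : Directed (· ⊇ ·)
      (fun c : {c : ℝ // ∃ z ∈ Icc p q, φ z ≤ c} => {z | z ∈ Icc p q ∧ φ z ≤ c.1}) := by
    intro c d
    rcases le_total c.1 d.1 with h | h
    · exact ⟨c, subset_refl _, fun z hz => ⟨hz.1, le_trans hz.2 h⟩⟩
    · exact ⟨d, fun z hz => ⟨hz.1, le_trans hz.2 h⟩, subset_refl _⟩
  have hne : ∀ c : {c : ℝ // ∃ z ∈ Icc p q, φ z ≤ c},
      {z | z ∈ Icc p q ∧ φ z ≤ c.1}.Nonempty := by
    rintro ⟨c, z, hz1, hz2⟩; exact ⟨z, hz1, hz2⟩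
  have hcpt : ∀ c : {c : ℝ // ∃ z ∈ Icc p q, φ z ≤ c},
      IsCompact {z | z ∈ Icc p q ∧ φ z ≤ c.1} := fun c =>
    IsCompact.of_isClosed_subset isCompact_Icc (hclosed c.1) (fun z hz => hz.1)
  obtain ⟨m, hm⟩ := IsCompact.nonempty_iInter_of_directed_nonempty_isCompact_isClosed
    _ hdir hne hcpt (fun c => hclosed c.1)
  rw [mem_iInter] at hm
  have hm0 : m ∈ Icc p q := (hm ⟨φ p, ⟨p, left_mem_Icc.mpr hpq, le_refl _⟩⟩).1
  exact ⟨m, hm0, fun y hy => (hm ⟨φ y, ⟨y, hy, le_refl _⟩⟩).2⟩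

lemma dini_neg_iff {φ : ℝ → ℝ} {s u : ℝ} :
    dini φ s u < 0 ↔
      (∃ m : ℝ, ∀ᶠ h in nhdsWithin (0:ℝ) (Ioi 0), m * h ≤ φ (s + h * u) - φ s) ∧
      (∃ c : ℝ, c < 0 ∧ ∃ᶠ h in nhdsWithin (0:ℝ) (Ioi 0), φ (s + h * u) - φ s < c * h) := by
  have hdini : dini φ s u =
      sSup {a : ℝ | ∀ᶠ h in nhdsWithin (0:ℝ) (Ioi 0), a ≤ (φ (s + h * u) - φ s) / h} := by
    unfold dini; rw [liminf_eq]
  set S := {a : ℝ | ∀ᶠ h in nhdsWithin (0:ℝ) (Ioi 0), a ≤ (φ (s + h * u) - φ s) / h} with hS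
  constructor
  · intro hd
    rw [hdini] at hd
    have hSne : S.Nonempty := by
      by_contra hemp
      rw [not_nonempty_iff_eq_empty] at hemp
      rw [hemp, Real.sSup_empty] at hd; linarith
    have hSbdd : BddAbove S := by
      by_contra hb
      rw [csSup_of_not_bddAbove hb, Real.sSup_empty] at hd; linarith
    obtain ⟨m, hm⟩ := hSne
    refine ⟨⟨m, ?_⟩, ⟨sSup S / 2, by linarith, ?_⟩⟩
    · filter_upwards [hm, self_mem_nhdsWithin] with h hh hh0
      rw [mem_Ioi] at hh0
      have h1 : m * h ≤ ((φ (s + h * u) - φ s) / h) * h :=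
        mul_le_mul_of_nonneg_right hh hh0.le
      rwa [div_mul_cancel₀ _ hh0.ne'] at h1
    · by_contra hfr
      rw [not_frequently] at hfr
      have hmem : sSup S / 2 ∈ S := by
        rw [hS]
        filter_upwards [hfr, self_mem_nhdsWithin] with h hh hh0
        rw [mem_Ioi] at hh0
        rw [not_lt] at hh
        exact (le_div_iff₀ hh0).mpr hh
      have := le_csSup hSbdd hmem
      linarith
  · rintro ⟨⟨m, hm⟩, c, hc, hfr⟩
    rw [hdini]
    have hmS : m ∈ S := by
      rw [hS]
      filter_upwards [hm, self_mem_nhdsWithin] with h hh hh0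
      rw [mem_Ioi] at hh0
      exact (le_div_iff₀ hh0).mpr hh
    have hbdd : ∀ a ∈ S, a ≤ c := by
      intro a ha
      have ha' : ∀ᶠ h in nhdsWithin (0:ℝ) (Ioi 0), a ≤ (φ (s + h * u) - φ s) / h := ha
      obtain ⟨h, hh1, hh2, hh0⟩ := (hfr.and_eventually (ha'.and self_mem_nhdsWithin)).exists
      have h1 : (φ (s + h * u) - φ s) / h < c := (div_lt_iff₀ hh0).mpr (by linarith)
      linarith
    have h2 : sSup S ≤ c := csSup_le ⟨m, hmS⟩ hbdd
    linarith

lemma tendsto_mul_right_pos {r : ℝ} (hr : 0 < r) :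
    Tendsto (fun h : ℝ => h * r) (nhdsWithin (0:ℝ) (Ioi 0)) (nhdsWithin (0:ℝ) (Ioi 0)) := by
  apply tendsto_nhdsWithin_of_tendsto_nhds_of_eventually_within
  · have h0 : Tendsto (fun h : ℝ => h * r) (nhds 0) (nhds (0 * r)) := tendsto_id.mul_const r
    rw [zero_mul] at h0
    exact h0.mono_left nhdsWithin_le_nhds
  · filter_upwards [self_mem_nhdsWithin] with h hh
    rw [mem_Ioi] at hh
    exact mul_pos hh hr

lemma dini_neg_scale {φ : ℝ → ℝ} {s u : ℝ} (r : ℝ) (hr : 0 < r)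
    (hd : dini φ s u < 0) : dini φ s (r * u) < 0 := by
  rw [dini_neg_iff] at hd ⊢
  obtain ⟨⟨m, hm⟩, c, hc, hfr⟩ := hd
  constructor
  · refine ⟨m * r, ?_⟩
    have h1 := (tendsto_mul_right_pos hr).eventually hm
    filter_upwards [h1] with h hh
    have e1 : s + h * r * u = s + h * (r * u) := by ring
    rw [e1] at hh
    calc m * r * h = m * (h * r) := by ring
      _ ≤ φ (s + h * (r * u)) - φ s := hh
  · refine ⟨c * r, by nlinarith, ?_⟩
    have hinv : Tendsto (fun h : ℝ => h * r⁻¹)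
        (nhdsWithin (0:ℝ) (Ioi 0)) (nhdsWithin (0:ℝ) (Ioi 0)) :=
      tendsto_mul_right_pos (inv_pos.mpr hr)
    have h2 : ∃ᶠ h in nhdsWithin (0:ℝ) (Ioi 0),
        φ (s + (h * r⁻¹) * (r * u)) - φ s < (c * r) * (h * r⁻¹) := by
      apply hfr.mono
      intro h hh
      have e1 : s + (h * r⁻¹) * (r * u) = s + h * u := by field_simp
      have e2 : (c * r) * (h * r⁻¹) = c * h := by field_simp
      rw [e1, e2]
      exact hh
    exact hinv.frequently h2

theorem stmt6 (I : Set ℝ) (hI : I.OrdConnected) (φ : ℝ → ℝ)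
    (hlsc : LowerSemicontinuousOn φ I) :
    PseudoconvexOn φ I ↔
      ((ArgminSet φ I = ∅ ∧ (StrictMonoOn φ I ∨ StrictAntiOn φ I)) ∨
        ((ArgminSet φ I).Nonempty ∧ Convex ℝ (ArgminSet φ I) ∧
          (∀ a ∈ ArgminSet φ I, ∀ b ∈ ArgminSet φ I, φ a = φ b) ∧
          StrictMonoOn φ {t ∈ I | ∀ s ∈ ArgminSet φ I, s ≤ t} ∧
          StrictAntiOn φ {t ∈ I | ∀ s ∈ ArgminSet φ I, t ≤ s})) ∧
      (∀ t ∈ I \ ArgminSet φ I, ¬ Stationary φ I t) := by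
  constructor
  · intro hP
    have hdr : ∀ y ∈ I, ∀ r ∈ I, φ r < φ y → y < r →
        ∀ ε > 0, ∃ z ∈ Ioo y (y + ε), φ z < φ y := by
      intro y hy r hr hφ hlt ε hε
      exact descent_right (hP y hy r hr hφ) (by linarith) ε hε
    have hdl : ∀ y ∈ I, ∀ r ∈ I, φ r < φ y → r < y →
        ∀ ε > 0, ∃ z ∈ Ioo (y - ε) y, φ z < φ y := by
      intro y hy r hr hφ hlt ε hε
      exact descent_left (hP y hy r hr hφ) (by linarith) ε hε
    have hnomin : ∀ y ∈ I, y ∉ ArgminSet φ I → ∃ r ∈ I, φ r < φ y := by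
      intro y hy hyA
      by_contra hno
      push_neg at hno
      exact hyA ⟨hy, fun z hz => hno z hz⟩
    constructor
    · by_cases hAe : ArgminSet φ I = ∅
      · left
        refine ⟨hAe, ?_⟩
        have hnm : ∀ y ∈ I, ∃ r ∈ I, φ r < φ y := by
          intro y hy
          exact hnomin y hy (by rw [hAe]; exact notMem_empty y)
        -- injectivity on comparable pairs
        have hM : ∀ p ∈ I, ∀ q ∈ I, p < q → φ p ≠ φ q := by
          intro p hp q hq hpq heq
          have hsub : Icc p q ⊆ I := hI.out hp hq
          obtain ⟨m, hm, hmin⟩ := exists_min_Icc hlsc hpq.le hsub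
          obtain ⟨r, hrI, hrφ⟩ := hnm m (hsub hm)
          have hrout : r ∉ Icc p q := fun hr => absurd (hmin r hr) (not_le.mpr hrφ)
          rcases lt_or_ge q r with hqr | hrq
          · have hanti : StrictAntiOn φ (Icc p q) := key_D hlsc hsub (by
              intro y hy ε hε
              exact hdr y (hsub ⟨hy.1, hy.2.le⟩) r hrI
                (lt_of_lt_of_le hrφ (hmin y ⟨hy.1, hy.2.le⟩))
                (lt_of_le_of_lt hy.2.le hqr) ε hε)
            have := hanti (left_mem_Icc.mpr hpq.le) (right_mem_Icc.mpr hpq.le) hpq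
            linarith
          · have hrp : r < p := by
              by_contra hge
              push_neg at hge
              exact hrout ⟨hge, hrq⟩
            have hmono : StrictMonoOn φ (Icc p q) := key_D' hlsc hsub (by
              intro y hy ε hε
              exact hdl y (hsub ⟨hy.1.le, hy.2⟩) r hrI
                (lt_of_lt_of_le hrφ (hmin y ⟨hy.1.le, hy.2⟩))
                (lt_trans hrp hy.1) ε hε)
            have := hmono (left_mem_Icc.mpr hpq.le) (right_mem_Icc.mpr hpq.le) hpq
            linarith
        by_cases hmono : StrictMonoOn φ I
        · exact Or.inl hmono
        · right
          rw [StrictMonoOn] at hmono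
          push_neg at hmono
          obtain ⟨p', hp', q', hq', hpq', hge⟩ := hmono
          have h2 : φ q' < φ p' := lt_of_le_of_ne hge (fun he => hM p' hp' q' hq' hpq' he.symm)
          intro p hp q hq hpq
          by_contra hle
          push_neg at hle
          have h1 : φ p < φ q := lt_of_le_of_ne hle (hM p hp q hq hpq)
          have haI : min p p' ∈ I := by
            rcases le_total p p' with h | h
            · rwa [min_eq_left h]
            · rwa [min_eq_right h]
          have hbI : max q q' ∈ I := by
            rcases le_total q q' with h | h
            · rwa [max_eq_right h]
            · rwa [max_eq_left h]
          have hab : min p p' ≤ max q q' :=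
            le_trans (min_le_left p p') (le_trans hpq.le (le_max_left q q'))
          have hsub : Icc (min p p') (max q q') ⊆ I := hI.out haI hbI
          obtain ⟨m, hm, hmin⟩ := exists_min_Icc hlsc hab hsub
          obtain ⟨r, hrI, hrφ⟩ := hnm m (hsub hm)
          have hrout : r ∉ Icc (min p p') (max q q') := fun hr =>
            absurd (hmin r hr) (not_le.mpr hrφ)
          have hpmem : p ∈ Icc (min p p') (max q q') :=
            ⟨min_le_left _ _, le_trans hpq.le (le_max_left _ _)⟩
          have hqmem : q ∈ Icc (min p p') (max q q') :=
            ⟨le_trans (min_le_left _ _) hpq.le, le_max_left _ _⟩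
          have hp'mem : p' ∈ Icc (min p p') (max q q') :=
            ⟨min_le_right _ _, le_trans hpq'.le (le_max_right _ _)⟩
          have hq'mem : q' ∈ Icc (min p p') (max q q') :=
            ⟨le_trans (min_le_right _ _) hpq'.le, le_max_right _ _⟩
          rcases lt_or_ge (max q q') r with hbr | hrb
          · have hanti : StrictAntiOn φ (Icc (min p p') (max q q')) := key_D hlsc hsub (by
              intro y hy ε hε
              exact hdr y (hsub ⟨hy.1, hy.2.le⟩) r hrI
                (lt_of_lt_of_le hrφ (hmin y ⟨hy.1, hy.2.le⟩))
                (lt_of_le_of_lt hy.2.le hbr) ε hε)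
            linarith [hanti hpmem hqmem hpq]
          · have hra : r < min p p' := by
              by_contra hge'
              push_neg at hge'
              exact hrout ⟨hge', hrb⟩
            have hmono' : StrictMonoOn φ (Icc (min p p') (max q q')) := key_D' hlsc hsub (by
              intro y hy ε hε
              exact hdl y (hsub ⟨hy.1.le, hy.2⟩) r hrI
                (lt_of_lt_of_le hrφ (hmin y ⟨hy.1.le, hy.2⟩))
                (lt_trans hra hy.1) ε hε)
            linarith [hmono' hp'mem hq'mem hpq']
      · right
        have hAne : (ArgminSet φ I).Nonempty := nonempty_iff_ne_empty.mpr hAe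
        obtain ⟨a0, ha0⟩ := hAne
        have hconst : ∀ a ∈ ArgminSet φ I, ∀ b ∈ ArgminSet φ I, φ a = φ b :=
          fun a ha b hb => le_antisymm (ha.2 b hb.1) (hb.2 a ha.1)
        have hint : ∀ a ∈ ArgminSet φ I, ∀ b ∈ ArgminSet φ I, ∀ x, a < x → x < b →
            x ∈ ArgminSet φ I := by
          intro a ha b hb x hax hxb
          have hxI : x ∈ I := hI.out ha.1 hb.1 ⟨hax.le, hxb.le⟩
          by_contra hxA
          have hge : φ a ≤ φ x := ha.2 x hxI
          have hlt : φ a < φ x := lt_of_le_of_ne hge (fun he => hxA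
            ⟨hxI, fun z hz => he ▸ ha.2 z hz⟩)
          have hsubax : Icc a x ⊆ I := hI.out ha.1 hxI
          have hsubxb : Icc x b ⊆ I := hI.out hxI hb.1
          have hneax : {z | z ∈ Icc a x ∧ φ z ≤ φ a}.Nonempty :=
            ⟨a, left_mem_Icc.mpr hax.le, le_refl _⟩
          have hnexb : {z | z ∈ Icc x b ∧ φ z ≤ φ a}.Nonempty :=
            ⟨b, right_mem_Icc.mpr hxb.le, (hconst b hb a ha).le⟩
          obtain ⟨hαmem, hαc⟩ := lsc_sSup_mem hlsc hsubax hneax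
          obtain ⟨hβmem, hβc⟩ := lsc_sInf_mem hlsc hsubxb hnexb
          set α := sSup {z | z ∈ Icc a x ∧ φ z ≤ φ a} with hα
          set β := sInf {z | z ∈ Icc x b ∧ φ z ≤ φ a} with hβ
          have hαx : α < x := by
            rcases lt_or_eq_of_le hαmem.2 with h | h
            · exact h
            · rw [h] at hαc; linarith
          have hxβ : x < β := by
            rcases lt_or_eq_of_le hβmem.1 with h | h
            · exact h
            · rw [← h] at hβc; linarith
          have hgt : ∀ y, α < y → y < β → φ a < φ y := by
            intro y hαy hyβ
            rcases le_total y x with hyx | hxy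
            · by_contra hle
              push_neg at hle
              have hay : a ≤ y := le_trans hαmem.1 hαy.le
              have : y ≤ α := le_csSup
                (BddAbove.mono (fun z hz => hz.1) bddAbove_Icc) ⟨⟨hay, hyx⟩, hle⟩
              linarith
            · by_contra hle
              push_neg at hle
              have hyb : y ≤ b := le_trans hyβ.le hβmem.2
              have : β ≤ y := csInf_le
                (BddBelow.mono (fun z hz => hz.1) bddBelow_Icc) ⟨⟨hxy, hyb⟩, hle⟩
              linarith
          set y₂ := (x + β) / 2 with hy₂
          have hxy₂ : x < y₂ := by rw [hy₂]; linarith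
          have hy₂β : y₂ < β := by rw [hy₂]; linarith
          have hsub' : Icc x y₂ ⊆ I := fun z hz =>
            hsubxb ⟨hz.1, le_trans hz.2 (le_trans hy₂β.le hβmem.2)⟩
          have hanti : StrictAntiOn φ (Icc x y₂) := key_D hlsc hsub' (by
            intro y hy ε hε
            have hyI : y ∈ I := hsub' ⟨hy.1, hy.2.le⟩
            have hαy : α < y := lt_of_lt_of_le hαx hy.1
            have hyβ' : y < β := lt_trans hy.2 hy₂β
            have hφβy : φ β < φ y := lt_of_le_of_lt hβc (hgt y hαy hyβ')
            exact hdr y hyI β (hsubxb hβmem) hφβy hyβ' ε hε)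
          have hmono2 : StrictMonoOn φ (Icc x y₂) := key_D' hlsc hsub' (by
            intro y hy ε hε
            have hyI : y ∈ I := hsub' ⟨hy.1.le, hy.2⟩
            have hαy : α < y := lt_trans hαx hy.1
            have hyβ' : y < β := lt_of_le_of_lt hy.2 hy₂β
            have hφαy : φ α < φ y := lt_of_le_of_lt hαc (hgt y hαy hyβ')
            exact hdl y hyI α (hsubax hαmem) hφαy hαy ε hε)
          have e1 := hanti (left_mem_Icc.mpr hxy₂.le) (right_mem_Icc.mpr hxy₂.le) hxy₂
          have e2 := hmono2 (left_mem_Icc.mpr hxy₂.le) (right_mem_Icc.mpr hxy₂.le) hxy₂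
          linarith
        have hconv : Convex ℝ (ArgminSet φ I) := by
          rw [convex_iff_ordConnected]
          refine ⟨fun a ha b hb => fun z hz => ?_⟩
          rcases eq_or_lt_of_le hz.1 with he | h1
          · rwa [← he]
          rcases eq_or_lt_of_le hz.2 with he | h2
          · rwa [he]
          exact hint a ha b hb z h1 h2
        refine ⟨⟨a0, ha0⟩, hconv, hconst, ?_, ?_⟩
        · intro p hp q hq hpq
          have hsub : Icc p q ⊆ I := hI.out hp.1 hq.1
          have hmono : StrictMonoOn φ (Icc p q) := key_D' hlsc hsub (by
            intro y hy ε hε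
            have hyI : y ∈ I := hsub ⟨hy.1.le, hy.2⟩
            have hyA : y ∉ ArgminSet φ I := fun hyA =>
              absurd (hp.2 y hyA) (not_le.mpr hy.1)
            obtain ⟨rr, hrrI, hrrφ⟩ := hnomin y hyI hyA
            have ha0y : φ a0 < φ y := lt_of_le_of_lt (ha0.2 rr hrrI) hrrφ
            have ha0lt : a0 < y := lt_of_le_of_lt (hp.2 a0 ha0) hy.1
            exact hdl y hyI a0 ha0.1 ha0y ha0lt ε hε)
          exact hmono (left_mem_Icc.mpr hpq.le) (right_mem_Icc.mpr hpq.le) hpq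
        · intro p hp q hq hpq
          have hsub : Icc p q ⊆ I := hI.out hp.1 hq.1
          have hanti : StrictAntiOn φ (Icc p q) := key_D hlsc hsub (by
            intro y hy ε hε
            have hyI : y ∈ I := hsub ⟨hy.1, hy.2.le⟩
            have hyA : y ∉ ArgminSet φ I := fun hyA =>
              absurd (hq.2 y hyA) (not_le.mpr hy.2)
            obtain ⟨rr, hrrI, hrrφ⟩ := hnomin y hyI hyA
            have ha0y : φ a0 < φ y := lt_of_le_of_lt (ha0.2 rr hrrI) hrrφ
            have hylt : y < a0 := lt_of_lt_of_le hy.2 (hq.2 a0 ha0)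
            exact hdr y hyI a0 ha0.1 ha0y hylt ε hε)
          exact hanti (left_mem_Icc.mpr hpq.le) (right_mem_Icc.mpr hpq.le) hpq
    · rintro t ⟨htI, htA⟩ hst
      obtain ⟨r, hrI, hrφ⟩ := hnomin t htI htA
      have hdini := hP t htI r hrI hrφ
      have hadm : Admissible I t (r - t) := by
        refine ⟨1, one_pos, fun h hh => ?_⟩
        rcases le_total t r with hc | hc
        · exact hI.out htI hrI ⟨by nlinarith [hh.1], by nlinarith [hh.1, hh.2]⟩
        · exact hI.out hrI htI ⟨by nlinarith [hh.1, hh.2], by nlinarith [hh.1]⟩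
      linarith [hst (r - t) hadm]
  · rintro ⟨hstruct, hstat⟩
    intro s hs t ht hφ
    have hsA : s ∉ ArgminSet φ I := fun hsA => absurd (hsA.2 t ht) (not_le.mpr hφ)
    have hns := hstat s ⟨hs, hsA⟩
    rw [Stationary] at hns
    push_neg at hns
    obtain ⟨u, hadm, hdu⟩ := hns
    have hu0 : u ≠ 0 := by
      intro he
      rw [he, dini_zero] at hdu
      linarith
    have hpts : ∀ ε > 0, ∃ h : ℝ, 0 < h ∧ h < ε ∧ φ (s + h * u) < φ s ∧ s + h * u ∈ I := by
      intro ε hε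
      obtain ⟨δ, hδ, hδI⟩ := hadm
      have hfr := frequently_lt_of_dini_neg hdu
      have hev : Ioo (0:ℝ) (min ε δ) ∈ nhdsWithin (0:ℝ) (Ioi 0) :=
        Ioo_mem_nhdsGT_of_mem ⟨le_refl 0, lt_min hε hδ⟩
      obtain ⟨h, hh1, hh2⟩ := (hfr.and_eventually (eventually_of_mem hev (fun x hx => hx))).exists
      exact ⟨h, hh2.1, lt_of_lt_of_le hh2.2 (min_le_left _ _), hh1,
        hδI h ⟨hh2.1, lt_of_lt_of_le hh2.2 (min_le_right _ _)⟩⟩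
    have htrans : ∀ u' : ℝ, 0 < u' / u → dini φ s u' < 0 := by
      intro u' hr
      have h1 := dini_neg_scale (u' / u) hr hdu
      rwa [div_mul_cancel₀ u' hu0] at h1
    rcases hstruct with ⟨hAe, hmon | hant⟩ | ⟨hAne, hconv, hconst, hIp, hIm⟩
    · have hts : t < s := by
        rcases lt_trichotomy t s with h | h | h
        · exact h
        · rw [h] at hφ; linarith
        · linarith [hmon hs ht h]
      have hun : u < 0 := by
        rcases lt_trichotomy u 0 with h | h | h
        · exact h
        · exact absurd h hu0
        · obtain ⟨h', hh1, hh2, hh3, hh4⟩ := hpts 1 one_pos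
          have hlt : s < s + h' * u := by nlinarith
          linarith [hmon hs hh4 hlt]
      exact htrans (t - s) (div_pos_iff.mpr (Or.inr ⟨by linarith, hun⟩))
    · have hts : s < t := by
        rcases lt_trichotomy t s with h | h | h
        · linarith [hant ht hs h]
        · rw [h] at hφ; linarith
        · exact h
      have hup : 0 < u := by
        rcases lt_trichotomy u 0 with h | h | h
        · obtain ⟨h', hh1, hh2, hh3, hh4⟩ := hpts 1 one_pos
          have hlt : s + h' * u < s := by nlinarith
          linarith [hant hh4 hs hlt]
        · exact absurd h hu0
        · exact h
      exact htrans (t - s) (div_pos (by linarith) hup)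
    · by_cases hplus : ∀ a ∈ ArgminSet φ I, a ≤ s
      · have hsIp : s ∈ {t | t ∈ I ∧ ∀ s' ∈ ArgminSet φ I, s' ≤ t} := ⟨hs, hplus⟩
        have hts : t < s := by
          rcases lt_trichotomy t s with h | h | h
          · exact h
          · rw [h] at hφ; linarith
          · have htIp : t ∈ {t | t ∈ I ∧ ∀ s' ∈ ArgminSet φ I, s' ≤ t} :=
              ⟨ht, fun a ha => le_trans (hplus a ha) h.le⟩
            linarith [hIp hsIp htIp h]
        have hun : u < 0 := by
          rcases lt_trichotomy u 0 with h | h | h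
          · exact h
          · exact absurd h hu0
          · obtain ⟨h', hh1, hh2, hh3, hh4⟩ := hpts 1 one_pos
            have hlt : s < s + h' * u := by nlinarith
            have hmem : s + h' * u ∈ {t | t ∈ I ∧ ∀ s' ∈ ArgminSet φ I, s' ≤ t} :=
              ⟨hh4, fun a ha => le_trans (hplus a ha) hlt.le⟩
            linarith [hIp hsIp hmem hlt]
        exact htrans (t - s) (div_pos_iff.mpr (Or.inr ⟨by linarith, hun⟩))
      · push_neg at hplus
        obtain ⟨a1, ha1, hsa1⟩ := hplus
        have hminus : ∀ a ∈ ArgminSet φ I, s ≤ a := by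
          intro a ha
          by_contra hlt
          push_neg at hlt
          have hseg : Icc a a1 ⊆ ArgminSet φ I := by
            rw [← segment_eq_Icc (le_trans hlt.le hsa1.le)]
            exact hconv.segment_subset ha ha1
          exact hsA (hseg ⟨hlt.le, hsa1.le⟩)
        have hsIm : s ∈ {t | t ∈ I ∧ ∀ s' ∈ ArgminSet φ I, t ≤ s'} := ⟨hs, hminus⟩
        have hts : s < t := by
          rcases lt_trichotomy t s with h | h | h
          · have htIm : t ∈ {t | t ∈ I ∧ ∀ s' ∈ ArgminSet φ I, t ≤ s'} :=
              ⟨ht, fun a ha => le_trans h.le (hminus a ha)⟩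
            linarith [hIm htIm hsIm h]
          · rw [h] at hφ; linarith
          · exact h
        have hup : 0 < u := by
          rcases lt_trichotomy u 0 with h | h | h
          · obtain ⟨h', hh1, hh2, hh3, hh4⟩ := hpts 1 one_pos
            have hlt : s + h' * u < s := by nlinarith
            have hmem : s + h' * u ∈ {t | t ∈ I ∧ ∀ s' ∈ ArgminSet φ I, t ≤ s'} :=
              ⟨hh4, fun a ha => le_trans hlt.le (hminus a ha)⟩
            linarith [hIm hmem hsIm hlt]
          · exact absurd h hu0
          · exact h
        exact htrans (t - s) (div_pos (by linarith) hup)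
end

section
/- Let X ⊆ R^n be a convex set and f : X → R be radially lower semicontinuous and pseudoconvex with respect to the lower Dini derivative. Then f is semistrictly quasiconvex, i.e., for all x, y ∈ X with f(y) < f(x) and all t ∈ (0,1), f(x + t(y-x)) < f(x). -/
open Filter Set

/- ----------------- auxiliary lemmas ----------------- -/

/-- From a negative lower Dini derivative, extract arbitrarily small steps
    along which the function strictly decreases. -/
lemma dini_freq (g : ℝ → ℝ) {s u : ℝ} (h : dini g s u < 0) {δ : ℝ} (hδ : 0 < δ) :
    ∃ t : ℝ, 0 < t ∧ t < δ ∧ g (s + t * u) < g s := by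
  by_contra hcon
  push_neg at hcon
  have hev : ∀ᶠ t in nhdsWithin (0:ℝ) (Ioi 0), (0:ℝ) ≤ (g (s + t * u) - g s) / t := by
    filter_upwards [Ioo_mem_nhdsGT_of_mem (⟨le_refl (0:ℝ), hδ⟩ : (0:ℝ) ∈ Ico (0:ℝ) δ)]
      with t ht
    exact div_nonneg (by linarith [hcon t ht.1 ht.2]) ht.1.le
  have h0 : (0:ℝ) ≤ dini g s u := by
    rw [dini, liminf_eq]
    by_cases hb : BddAbove {a : ℝ | ∀ᶠ t in nhdsWithin (0:ℝ) (Ioi 0),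
        a ≤ (g (s + t * u) - g s) / t}
    · exact le_csSup hb hev
    · rw [csSup_of_not_bddAbove hb, Real.sSup_empty]
  linarith

/-- Sublevel sets of a lower semicontinuous function intersected with a
    closed subinterval are closed. -/
lemma sublevel_closed_s8 (g : ℝ → ℝ) (hg : LowerSemicontinuousOn g (Icc 0 1)) {p q c : ℝ}
    (hsub : Icc p q ⊆ Icc (0:ℝ) 1) :
    IsClosed {s : ℝ | s ∈ Icc p q ∧ g s ≤ c} := by
  set S := {s : ℝ | s ∈ Icc p q ∧ g s ≤ c} with hS
  apply isClosed_of_closure_subset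
  intro x hx
  have hxpq : x ∈ Icc p q := by
    have h1 : closure S ⊆ closure (Icc p q) := closure_mono (fun s hs => hs.1)
    simpa [isClosed_Icc.closure_eq] using h1 hx
  refine ⟨hxpq, ?_⟩
  by_contra hc
  push_neg at hc
  have hev := hg x (hsub hxpq) c hc
  have hne : (nhdsWithin x S).NeBot := mem_closure_iff_nhdsWithin_neBot.1 hx
  have hmono : nhdsWithin x S ≤ nhdsWithin x (Icc 0 1) :=
    nhdsWithin_mono _ (fun s hs => hsub hs.1)
  have h1 : ∀ᶠ r in nhdsWithin x S, c < g r := hev.filter_mono hmono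
  have h2 : ∀ᶠ r in nhdsWithin x S, g r ≤ c :=
    eventually_mem_nhdsWithin.mono (fun r hr => hr.2)
  obtain ⟨r, h1r, h2r⟩ := (h1.and h2).exists
  linarith

/-- A lower semicontinuous function attains its minimum on a compact interval. -/
lemma lsc_exists_min_s8 (g : ℝ → ℝ) {p q : ℝ} (hpq : p ≤ q)
    (hg : LowerSemicontinuousOn g (Icc p q)) :
    ∃ μ ∈ Icc p q, ∀ s ∈ Icc p q, g μ ≤ g s := by
  by_contra hcon
  push_neg at hcon
  have key : ∀ μ : ℝ, ∃ s O, μ ∈ Icc p q →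
      s ∈ Icc p q ∧ IsOpen O ∧ μ ∈ O ∧ ∀ r ∈ O ∩ Icc p q, g s < g r := by
    intro μ
    by_cases hμ : μ ∈ Icc p q
    · obtain ⟨s, hs, hgs⟩ := hcon μ hμ
      have hev := hg μ hμ (g s) hgs
      obtain ⟨O, hO, hμO, hsubO⟩ := mem_nhdsWithin.1 hev
      exact ⟨s, O, fun _ => ⟨hs, hO, hμO, fun r hr => hsubO hr⟩⟩
    · exact ⟨p, ∅, fun h => absurd h hμ⟩
  choose sf Of hkey using key
  obtain ⟨t, htsub, hcov⟩ := (isCompact_Icc (a := p) (b := q)).elim_nhds_subcover Of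
    (fun μ hμ => ((hkey μ hμ).2.1).mem_nhds (hkey μ hμ).2.2.1)
  have htne : t.Nonempty := by
    rcases t.eq_empty_or_nonempty with h | h
    · exfalso
      have := hcov (⟨le_refl p, hpq⟩ : p ∈ Icc p q)
      simp [h] at this
    · exact h
  obtain ⟨μ₀, hμ₀t, hmin⟩ := t.exists_min_image (fun μ => g (sf μ)) htne
  have h1 := hkey μ₀ (htsub μ₀ hμ₀t)
  have hsfin : sf μ₀ ∈ Icc p q := h1.1
  have hmem : sf μ₀ ∈ ⋃ μ ∈ t, Of μ := hcov hsfin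
  simp only [mem_iUnion] at hmem
  obtain ⟨ν, hνt, hmemν⟩ := hmem
  have h2 := hkey ν (htsub ν hνt)
  have h3 : g (sf ν) < g (sf μ₀) := h2.2.2.2 (sf μ₀) ⟨hmemν, hsfin⟩
  have h4 : g (sf μ₀) ≤ g (sf ν) := hmin ν hνt
  linarith

/-- One-dimensional pseudoconvex + lower semicontinuous implies quasiconvex. -/
lemma quasi_of_pc (g : ℝ → ℝ) (hg : LowerSemicontinuousOn g (Icc 0 1))
    (hpc : PseudoconvexOn g (Icc 0 1)) :
    ∀ a ∈ Icc (0:ℝ) 1, ∀ b ∈ Icc (0:ℝ) 1, a ≤ b →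
      ∀ s ∈ Icc a b, g s ≤ max (g a) (g b) := by
  intro a ha b hb hab
  by_contra hcon
  push_neg at hcon
  obtain ⟨s₀, hs₀, hgs₀⟩ := hcon
  set c := max (g a) (g b) with hc
  have hIcc : Icc a b ⊆ Icc (0:ℝ) 1 := Icc_subset_Icc ha.1 hb.2
  have has₀ : a < s₀ := by
    rcases lt_or_eq_of_le hs₀.1 with h | h
    · exact h
    · exfalso; rw [← h] at hgs₀; exact absurd hgs₀ (not_lt.2 (le_max_left _ _))
  have hs₀b : s₀ < b := by
    rcases lt_or_eq_of_le hs₀.2 with h | h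
    · exact h
    · exfalso; rw [h] at hgs₀; exact absurd hgs₀ (not_lt.2 (le_max_right _ _))
  -- the sublevel sets to the left and right of s₀
  set S₁ := {s : ℝ | s ∈ Icc a s₀ ∧ g s ≤ c} with hS₁
  set S₂ := {s : ℝ | s ∈ Icc s₀ b ∧ g s ≤ c} with hS₂
  have hsub₁ : Icc a s₀ ⊆ Icc (0:ℝ) 1 := Icc_subset_Icc ha.1 (hIcc hs₀).2
  have hsub₂ : Icc s₀ b ⊆ Icc (0:ℝ) 1 := Icc_subset_Icc (hIcc hs₀).1 hb.2
  have hS₁c : IsClosed S₁ := sublevel_closed_s8 g hg hsub₁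
  have hS₂c : IsClosed S₂ := sublevel_closed_s8 g hg hsub₂
  have hS₁ne : S₁.Nonempty := ⟨a, ⟨le_refl a, has₀.le⟩, le_max_left _ _⟩
  have hS₂ne : S₂.Nonempty := ⟨b, ⟨hs₀b.le, le_refl b⟩, le_max_right _ _⟩
  have hS₁bdd : BddAbove S₁ := ⟨s₀, fun x hx => hx.1.2⟩
  have hS₂bdd : BddBelow S₂ := ⟨s₀, fun x hx => hx.1.1⟩
  set α := sSup S₁ with hαdef
  set β := sInf S₂ with hβdef
  have hα : α ∈ S₁ := hS₁c.csSup_mem hS₁ne hS₁bdd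
  have hβ : β ∈ S₂ := hS₂c.csInf_mem hS₂ne hS₂bdd
  have hαs₀ : α < s₀ := lt_of_le_of_ne hα.1.2 (by
    intro h; rw [h] at hα; linarith [hα.2])
  have hs₀β : s₀ < β := lt_of_le_of_ne hβ.1.1 (by
    intro h; rw [← h] at hβ; linarith [hβ.2])
  -- interior of (α, β): g > c there
  have hmid : ∀ s, α < s → s < β → c < g s := by
    intro s h1 h2
    by_contra hle
    push_neg at hle
    rcases le_total s s₀ with h | h
    · have hmem : s ∈ S₁ := ⟨⟨hα.1.1.trans h1.le, h⟩, hle⟩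
      have := le_csSup hS₁bdd hmem
      linarith
    · have hmem : s ∈ S₂ := ⟨⟨h, h2.le.trans hβ.1.2⟩, hle⟩
      have := csInf_le hS₂bdd hmem
      linarith
  -- midpoints
  set p := (α + s₀) / 2 with hpdef
  set q := (s₀ + β) / 2 with hqdef
  have hαp : α < p := by simp only [hpdef]; linarith
  have hps₀ : p < s₀ := by simp only [hpdef]; linarith
  have hs₀q : s₀ < q := by simp only [hqdef]; linarith
  have hqβ : q < β := by simp only [hqdef]; linarith
  have hpq : p < q := hps₀.trans hs₀q
  have hpq01 : Icc p q ⊆ Icc (0:ℝ) 1 := by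
    intro x hx
    have h1 : a ≤ x := hα.1.1.trans (hαp.le.trans hx.1)
    have h2 : x ≤ b := (hx.2.trans hqβ.le).trans hβ.1.2
    exact hIcc ⟨h1, h2⟩
  have hlscK : LowerSemicontinuousOn g (Icc p q) :=
    fun x hx => (hg x (hpq01 hx)).mono hpq01
  obtain ⟨μ, hμK, hμmin⟩ := lsc_exists_min_s8 g hpq.le hlscK
  have hαμ : α < μ := hαp.trans_le hμK.1
  have hμβ : μ < β := hμK.2.trans_lt hqβ
  have hgμ : c < g μ := hmid μ hαμ hμβ
  have hμ01 : μ ∈ Icc (0:ℝ) 1 := hpq01 hμK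
  rcases lt_or_eq_of_le hμK.2 with hlt | heq
  · -- μ < q : go toward β
    have hβ01 : β ∈ Icc (0:ℝ) 1 := hsub₂ hβ.1
    have hgβμ : g β < g μ := lt_of_le_of_lt hβ.2 hgμ
    have hd : dini g μ (β - μ) < 0 := hpc μ hμ01 β hβ01 hgβμ
    have hβμ : (0:ℝ) < β - μ := by linarith
    have hδpos : (0:ℝ) < (q - μ) / (β - μ) := div_pos (by linarith) hβμ
    obtain ⟨t, ht0, htδ, hgt⟩ := dini_freq g hd hδpos
    have hrK : μ + t * (β - μ) ∈ Icc p q := by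
      constructor
      · nlinarith [hμK.1]
      · have := (lt_div_iff₀ hβμ).1 htδ
        nlinarith
    have := hμmin _ hrK
    linarith
  · -- μ = q : go toward α
    have hα01 : α ∈ Icc (0:ℝ) 1 := hsub₁ hα.1
    have hgαμ : g α < g μ := lt_of_le_of_lt hα.2 hgμ
    have hd : dini g μ (α - μ) < 0 := hpc μ hμ01 α hα01 hgαμ
    have hμα : (0:ℝ) < μ - α := by linarith
    have hpμ : p < μ := by rw [heq]; exact hpq
    have hδpos : (0:ℝ) < (μ - p) / (μ - α) := div_pos (by linarith) hμα
    obtain ⟨t, ht0, htδ, hgt⟩ := dini_freq g hd hδpos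
    have hrK : μ + t * (α - μ) ∈ Icc p q := by
      constructor
      · have := (lt_div_iff₀ hμα).1 htδ
        nlinarith
      · nlinarith [hμK.2]
    have := hμmin _ hrK
    linarith

/-- One-dimensional semistrict quasiconvexity from pseudoconvexity + lsc. -/
lemma semistrict_of_pc (g : ℝ → ℝ) (hg : LowerSemicontinuousOn g (Icc 0 1))
    (hpc : PseudoconvexOn g (Icc 0 1)) (h10 : g 1 < g 0) :
    ∀ t ∈ Ioo (0:ℝ) 1, g t < g 0 := by
  intro t ht
  have h01 : (0:ℝ) ∈ Icc (0:ℝ) 1 := ⟨le_refl 0, zero_le_one⟩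
  have h11 : (1:ℝ) ∈ Icc (0:ℝ) 1 := ⟨zero_le_one, le_refl 1⟩
  have htI : t ∈ Icc (0:ℝ) 1 := ⟨ht.1.le, ht.2.le⟩
  have hq := quasi_of_pc g hg hpc 0 h01 1 h11 zero_le_one t htI
  rw [max_eq_left h10.le] at hq
  rcases lt_or_eq_of_le hq with h | h
  · exact h
  exfalso
  -- g t = g 0
  have hd1 : dini g t (1 - t) < 0 := hpc t htI 1 h11 (by rw [h]; exact h10)
  obtain ⟨h₁, h₁0, h₁1, hlt1⟩ := dini_freq g hd1 one_pos
  set s := t + h₁ * (1 - t) with hsdef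
  have hts : t < s := by nlinarith [ht.2]
  have hs1 : s < 1 := by nlinarith [ht.2]
  have hgs : g s < g 0 := by rw [← h]; exact hlt1
  have hsI : s ∈ Icc (0:ℝ) 1 := ⟨(ht.1.trans hts).le, hs1.le⟩
  have hs0 : (0:ℝ) < s := ht.1.trans hts
  have hd2 : dini g 0 s < 0 := by
    have := hpc 0 h01 s hsI hgs
    simpa using this
  have hδ2 : (0:ℝ) < t / s := div_pos ht.1 hs0
  obtain ⟨h₂, h₂0, h₂δ, hlt2⟩ := dini_freq g hd2 hδ2
  set r := h₂ * s with hrdef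
  have hgr : g r < g 0 := by simpa [hrdef] using hlt2
  have hr0 : (0:ℝ) < r := mul_pos h₂0 hs0
  have hrt : r < t := by
    have h5 := (lt_div_iff₀ hs0).1 h₂δ
    simpa [hrdef] using h5
  have hrI : r ∈ Icc (0:ℝ) 1 := ⟨hr0.le, (hrt.trans ht.2).le⟩
  have hqt := quasi_of_pc g hg hpc r hrI s hsI (hrt.le.trans hts.le) t ⟨hrt.le, hts.le⟩
  have hmax : max (g r) (g s) < g 0 := max_lt hgr hgs
  rw [h] at hqt
  linarith

theorem stmt8 {n : ℕ} (X : Set (Fin n → ℝ)) (hX : Convex ℝ X)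
    (f : (Fin n → ℝ) → ℝ) (hlsc : RadiallyLSC f X) (hpc : PseudoconvexOnV f X) :
    SemistrictlyQuasiconvexOn f X := by
  intro x hx y hy hxy t ht
  set g : ℝ → ℝ := fun s => f (x + s • (y - x)) with hgdef
  have hg0 : g 0 = f x := by simp [hgdef]
  have hg1 : g 1 = f y := by simp [hgdef]
  have hglsc : LowerSemicontinuousOn g (Icc 0 1) := hlsc x hx y hy
  have hmem : ∀ s ∈ Icc (0:ℝ) 1, x + s • (y - x) ∈ X := fun s hs =>
    hX.add_smul_sub_mem hx hy hs
  have hgpc : PseudoconvexOn g (Icc 0 1) := by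
    intro s hs r hr hlt
    have hzs := hmem s hs
    have hzr := hmem r hr
    have hd := hpc _ hzs _ hzr hlt
    have heq : diniV f (x + s • (y - x)) ((x + r • (y - x)) - (x + s • (y - x)))
        = dini g s (r - s) := by
      unfold diniV dini
      congr 1
      funext h
      have harg : (x + s • (y - x)) + h • ((x + r • (y - x)) - (x + s • (y - x)))
          = x + (s + h * (r - s)) • (y - x) := by
        module
      rw [harg]
    rw [heq] at hd
    exact hd
  have h10 : g 1 < g 0 := by rw [hg0, hg1]; exact hxy
  have := semistrict_of_pc g hglsc hgpc h10 t ht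
  rw [hg0] at this
  exact this
end

section
/- Let X ⊆ R^n be a convex set and f : X → R be radially lower semicontinuous and pseudoconvex with respect to the lower Dini derivative. Then f is quasiconvex: for all x, y ∈ X and t ∈ [0,1], f(x + t(y-x)) ≤ max(f(x), f(y)). -/
open Filter Set

lemma freq_neg_of_liminf_neg {u : ℝ → ℝ} {l : Filter ℝ} (h : liminf u l < 0) :
    ∃ᶠ t in l, u t < 0 := by
  by_contra hc
  simp only [not_frequently, not_lt] at hc
  have h0 : (0:ℝ) ∈ {a : ℝ | ∀ᶠ t in l, a ≤ u t} := hc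
  rw [liminf_eq] at h
  by_cases hb : BddAbove {a : ℝ | ∀ᶠ t in l, a ≤ u t}
  · exact absurd (le_csSup hb h0) (not_le.mpr h)
  · rw [Real.sSup_of_not_bddAbove hb] at h
    exact lt_irrefl _ h

lemma closed_sublevel_aux {φ g : ℝ → ℝ} {a b : ℝ}
    (hab : Icc a b ⊆ Icc 0 1)
    (hφ : LowerSemicontinuousOn φ (Icc (0:ℝ) 1)) (hg : Continuous g) :
    IsClosed {t : ℝ | t ∈ Icc a b ∧ φ t ≤ g t} := by
  rw [isClosed_iff_frequently]
  intro x hx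
  have hxI : x ∈ Icc a b := by
    rw [← isClosed_Icc.closure_eq]
    exact mem_closure_iff_frequently.mpr (hx.mono fun y hy => hy.1)
  refine ⟨hxI, ?_⟩
  by_contra hlt
  push_neg at hlt
  set k := (g x + φ x) / 2 with hk
  have hk1 : g x < k := by simp only [hk]; linarith
  have hk2 : k < φ x := by simp only [hk]; linarith
  have h1 : ∀ᶠ y in nhdsWithin x (Icc (0:ℝ) 1), k < φ y := hφ x (hab hxI) k hk2
  have h2 : ∀ᶠ y in nhds x, g y < k :=
    hg.continuousAt.eventually_lt continuousAt_const hk1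
  have h3 : ∀ᶠ y in nhdsWithin x (Icc (0:ℝ) 1), ¬(y ∈ Icc a b ∧ φ y ≤ g y) :=
    (h1.and (h2.filter_mono nhdsWithin_le_nhds)).mono
      (fun y hy hmem => absurd hmem.2 (not_le.mpr (hy.2.trans hy.1)))
  have h4 : ∃ᶠ y in nhdsWithin x (Icc (0:ℝ) 1), y ∈ Icc a b ∧ φ y ≤ g y := by
    rw [frequently_nhdsWithin_iff]
    exact hx.mono fun y hy => ⟨hy, hab hy.1⟩
  obtain ⟨y, hy1, hy2⟩ := (h3.and_frequently h4).exists
  exact hy1 hy2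

set_option maxHeartbeats 1000000 in
theorem stmt9 {n : ℕ} (X : Set (Fin n → ℝ)) (hX : Convex ℝ X)
    (f : (Fin n → ℝ) → ℝ) (hlsc : RadiallyLSC f X) (hpc : PseudoconvexOnV f X) :
    QuasiconvexOnSeg f X := by
  intro x hx y hy t₀ ht₀
  set v : Fin n → ℝ := y - x with hv
  set φ : ℝ → ℝ := fun t => f (x + t • v) with hφdef
  have hφ0 : φ 0 = f x := by simp [hφdef]
  have hφ1 : φ 1 = f y := by simp [hφdef, hv]
  by_contra hcon
  push_neg at hcon
  set M := max (f x) (f y) with hM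
  have hM0 : φ 0 ≤ M := by rw [hφ0]; exact le_max_left _ _
  have hM1 : φ 1 ≤ M := by rw [hφ1]; exact le_max_right _ _
  have hmem : ∀ p ∈ Icc (0:ℝ) 1, x + p • v ∈ X := by
    intro p hp
    have h := hX hx hy (by linarith [hp.2] : (0:ℝ) ≤ 1 - p) hp.1 (by ring)
    have : x + p • v = (1 - p) • x + p • y := by
      rw [hv]; module
    rw [this]; exact h
  have hlsc' : LowerSemicontinuousOn φ (Icc (0:ℝ) 1) := hlsc x hx y hy
  -- Key pseudoconvexity transfer
  have keyB : ∀ p ∈ Icc (0:ℝ) 1, ∀ q ∈ Icc (0:ℝ) 1, φ q < φ p →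
      ∀ δ > (0:ℝ), ∃ h ∈ Ioo (0:ℝ) δ, φ (p + h * (q - p)) < φ p := by
    intro p hp q hq hlt δ hδ
    have hz : diniV f (x + p • v) ((x + q • v) - (x + p • v)) < 0 :=
      hpc _ (hmem p hp) _ (hmem q hq) hlt
    have heq : (fun h : ℝ =>
        (f ((x + p • v) + h • ((x + q • v) - (x + p • v))) - f (x + p • v)) / h)
        = fun h : ℝ => (φ (p + h * (q - p)) - φ p) / h := by
      funext h
      have : (x + p • v) + h • ((x + q • v) - (x + p • v)) = x + (p + h * (q - p)) • v := by
        module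
      rw [this]
    rw [diniV, heq] at hz
    have hfreq := freq_neg_of_liminf_neg hz
    have hev : ∀ᶠ h in nhdsWithin (0:ℝ) (Ioi 0), h ∈ Ioo (0:ℝ) δ :=
      Ioo_mem_nhdsGT_of_mem ⟨le_refl 0, hδ⟩
    obtain ⟨h, hneg, hmem'⟩ := (hfreq.and_eventually hev).exists
    refine ⟨h, hmem', ?_⟩
    rcases div_neg_iff.mp hneg with ⟨_, hden⟩ | ⟨hnum, _⟩
    · exact absurd hmem'.1 (not_lt.mpr hden.le)
    · linarith
  have ht₀0 : 0 < t₀ := by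
    rcases lt_or_eq_of_le ht₀.1 with h | h
    · exact h
    · exfalso; rw [← h] at hcon; exact absurd hcon (not_lt.mpr hM0)
  have ht₀1 : t₀ < 1 := by
    rcases lt_or_eq_of_le ht₀.2 with h | h
    · exact h
    · exfalso; rw [h] at hcon; exact absurd hcon (not_lt.mpr hM1)
  set c := (M + φ t₀) / 2 with hc
  have hc1 : M < c := by simp only [hc]; linarith
  have hc2 : c < φ t₀ := by simp only [hc]; linarith
  have hsub : Icc (0:ℝ) t₀ ⊆ Icc (0:ℝ) 1 := Icc_subset_Icc le_rfl ht₀.2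
  set S := {t : ℝ | t ∈ Icc (0:ℝ) t₀ ∧ φ t ≤ c} with hS
  have hSclosed : IsClosed S := closed_sublevel_aux hsub hlsc' continuous_const
  have hS0 : (0:ℝ) ∈ S := ⟨⟨le_rfl, ht₀0.le⟩, by rw [hφ0]; linarith [le_max_left (f x) (f y)]⟩
  have hSbdd : BddAbove S := BddAbove.mono (fun t ht => ht.1) bddAbove_Icc
  set s := sSup S with hs
  have hsS : s ∈ S := hSclosed.csSup_mem ⟨0, hS0⟩ hSbdd
  have hs0 : 0 ≤ s := hsS.1.1
  have hst₀ : s < t₀ := lt_of_le_of_ne hsS.1.2 (fun h => by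
    rw [h] at hsS; linarith [hsS.2])
  have factA : ∀ t, s < t → t ≤ t₀ → c < φ t := by
    intro t hst ht
    by_contra hle
    push_neg at hle
    have : t ∈ S := ⟨⟨le_trans hs0 hst.le, ht⟩, hle⟩
    exact absurd (le_csSup hSbdd this) (not_le.mpr hst)
  -- monotonicity on (s, t₀]
  have factC : ∀ a b : ℝ, s < a → a ≤ b → b ≤ t₀ → φ a ≤ φ b := by
    intro a b hsa hab hbt
    have ha0 : 0 < a := lt_of_le_of_lt hs0 hsa
    have hb1 : b ≤ 1 := hbt.trans ht₀.2
    have key : ∀ ε > (0:ℝ), φ a ≤ φ b + ε * (b - a) := by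
      intro ε hε
      by_contra hcon2
      push_neg at hcon2
      set g : ℝ → ℝ := fun t => φ b + ε * (b - t) with hg
      set T := {t : ℝ | t ∈ Icc a b ∧ φ t ≤ g t} with hT
      have hTclosed : IsClosed T :=
        closed_sublevel_aux (Icc_subset_Icc ha0.le hb1) hlsc'
          (continuous_const.add (continuous_const.mul (continuous_const.sub continuous_id)))
      have hTb : b ∈ T := ⟨⟨hab, le_rfl⟩, by simp [hg]⟩
      have hTbdd : BddBelow T := BddBelow.mono (fun t ht => ht.1) bddBelow_Icc
      set τ := sInf T with hτ
      have hτT : τ ∈ T := hTclosed.csInf_mem ⟨b, hTb⟩ hTbdd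
      have hτa : a ≤ τ := hτT.1.1
      have hτne : a ≠ τ := by
        intro h
        rw [← h] at hτT
        have : φ a ≤ φ b + ε * (b - a) := hτT.2
        linarith
      have hτa' : a < τ := lt_of_le_of_ne hτa hτne
      have hτ0 : 0 < τ := lt_trans ha0 hτa'
      have hτt₀ : τ ≤ t₀ := hτT.1.2.trans hbt
      have hφτ : c < φ τ := factA τ (lt_trans hsa hτa') hτt₀
      have hφ0τ : φ 0 < φ τ := by
        calc φ 0 ≤ M := hM0
        _ < c := hc1
        _ < φ τ := hφτ
      have hτ1 : τ ∈ Icc (0:ℝ) 1 := ⟨hτ0.le, hτT.1.2.trans hb1⟩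
      obtain ⟨h, hh, hφ'⟩ := keyB τ hτ1 0 ⟨le_rfl, zero_le_one⟩ hφ0τ
        ((τ - a) / τ) (div_pos (by linarith) hτ0)
      set t' := τ + h * (0 - τ) with ht'
      have hht : h * τ < τ - a := by
        have h2 := (lt_div_iff₀ hτ0).mp hh.2
        linarith
      have ht'a : a < t' := by simp only [ht']; nlinarith
      have ht'τ : t' < τ := by
        simp only [ht']
        nlinarith [hh.1, hτ0]
      have ht'T : t' ∈ T := by
        refine ⟨⟨ht'a.le, ht'τ.le.trans hτT.1.2⟩, ?_⟩
        have h1 : φ t' < φ τ := hφ'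
        have h2 : φ τ ≤ φ b + ε * (b - τ) := hτT.2
        have h3 : ε * (b - τ) ≤ ε * (b - t') :=
          mul_le_mul_of_nonneg_left (by linarith) hε.le
        simp only [hg]
        linarith
      exact absurd (csInf_le hTbdd ht'T) (not_le.mpr ht'τ)
    by_contra hab2
    push_neg at hab2
    -- use ε small: φ a ≤ φ b + ε * (b - a) with b - a ≤ 1
    have hball : ∀ ε > (0:ℝ), φ a ≤ φ b + ε := by
      intro ε hε
      have := key ε hε
      have hba1 : b - a ≤ 1 := by linarith
      nlinarith
    have := le_of_forall_pos_le_add hball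
    linarith
  -- final contradiction
  set a := (s + t₀) / 2 with ha
  have hsa : s < a := by simp only [ha]; linarith
  have hat₀ : a < t₀ := by simp only [ha]; linarith
  have ha0 : 0 < a := lt_of_le_of_lt hs0 hsa
  have ha1 : a < 1 := lt_of_lt_of_le hat₀ ht₀.2
  have hφa : c < φ a := factA a hsa hat₀.le
  have hφ1a : φ 1 < φ a := by
    calc φ 1 ≤ M := hM1
    _ < c := hc1
    _ < φ a := hφa
  obtain ⟨h, hh, hφ'⟩ := keyB a ⟨ha0.le, ha1.le⟩ 1 ⟨zero_le_one, le_rfl⟩ hφ1a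
    ((t₀ - a) / (1 - a)) (div_pos (by linarith) (by linarith))
  set b' := a + h * (1 - a) with hb'
  have hab' : a ≤ b' := by nlinarith [hh.1]
  have hb't₀ : b' ≤ t₀ := by
    have h2 := (lt_div_iff₀ (by linarith : (0:ℝ) < 1 - a)).mp hh.2
    simp only [hb']
    linarith
  have := factC a b' hsa hab' hb't₀
  exact absurd hφ' (not_lt.mpr this)
end
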